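/- arXiv:0803.2004 — 9 statements merged into one kernel-verified Lean document; each statement's English description precedes it below -/
import Mathlib

section
/- If the divided differences of order n of a sequence ω on a discrete set Λ ⊂ ℂ are uniformly bounded with respect to the weight p (i.e., ω ∈ X^n_p(Λ)), then the divided differences of order n−1 are also uniformly bounded with respect to p (i.e., ω ∈ X^{n-1}_p(Λ)). -/
open Complex Metric Set

noncomputable def divDiff : (k : ℕ) → (ℂ → ℂ) → (Fin (k+1) → ℂ) → ℂ
  | 0, ω, z => ω (z 0)
  | k+1, ω, z =>
      (divDiff k ω (fun i => z i.succ) - divDiff k ω (fun i => z i.castSucc)) /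
        (z (Fin.last (k+1)) - z 0)

/-- `p` is a weight on `ℂ`: nonnegative, `p(z) ≥ K log(1+|z|²)` for some `K > 0`,
and `p(z) ≤ D₀ p(w) + E₀` whenever `|z-w| ≤ 1`. -/
def IsWeight (p : ℂ → ℝ) : Prop :=
  (∀ z, 0 ≤ p z) ∧
  (∃ K > 0, ∀ z : ℂ, K * Real.log (1 + ‖z‖ ^ 2) ≤ p z) ∧
  (∃ D > 0, ∃ E > 0, ∀ z w : ℂ, ‖z - w‖ ≤ 1 → p z ≤ D * p w + E)

/-- `ω ∈ X^k_p(Λ)`: the divided differences of order `k` (on `k+1` distinct points of `Λ`)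
are uniformly bounded with respect to the weight `p`. -/
def MemX (p : ℂ → ℝ) (Λ : Set ℂ) (k : ℕ) (ω : ℂ → ℂ) : Prop :=
  ∃ A > 0, ∃ B > 0, ∀ z : Fin (k+1) → ℂ, (∀ i, z i ∈ Λ) → Function.Injective z →
    ‖divDiff k ω z‖ ≤ A * Real.exp (B * ∑ i, p (z i))

/-- `f ∈ A_p`: `f` is entire with `|f(z)| ≤ A e^{B p(z)}` for some `A, B > 0`. -/
def MemAp (p : ℂ → ℝ) (f : ℂ → ℂ) : Prop :=
  Differentiable ℂ f ∧ ∃ A > 0, ∃ B > 0, ∀ z, ‖f z‖ ≤ A * Real.exp (B * p z)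

/-- `Λ` is interpolating for `A_p`. -/
def Interpolating (p : ℂ → ℝ) (Λ : Set ℂ) : Prop :=
  ∀ ω : ℂ → ℂ, (∃ A > 0, ∃ B > 0, ∀ l ∈ Λ, ‖ω l‖ ≤ A * Real.exp (B * p l)) →
    ∃ f, MemAp p f ∧ ∀ l ∈ Λ, f l = ω l

/-- Uniform interpolation bounds (Lemma 2.2.6 of Berenstein–Gay). -/
def UnifInterp (p : ℂ → ℝ) (Λ : Set ℂ) : Prop :=
  ∀ A > 0, ∀ B > 0, ∃ A' > 0, ∃ B' > 0, ∀ ω : ℂ → ℂ,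
    (∀ l ∈ Λ, ‖ω l‖ ≤ A * Real.exp (B * p l)) →
    ∃ f, Differentiable ℂ f ∧ (∀ z, ‖f z‖ ≤ A' * Real.exp (B' * p z)) ∧
      ∀ l ∈ Λ, f l = ω l

/-- `Λ` is weakly separated: the disks `D(l, ε e^{-C p l})` are pairwise disjoint. -/
def WeaklySeparated (p : ℂ → ℝ) (Λ : Set ℂ) : Prop :=
  ∃ ε > 0, ∃ C > 0, ∀ l ∈ Λ, ∀ m ∈ Λ, l ≠ m →
    Disjoint (ball l (ε * Real.exp (-C * p l))) (ball m (ε * Real.exp (-C * p m)))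

/-- `Λ` has no accumulation points in `ℂ`. -/
def DiscreteSet (Λ : Set ℂ) : Prop := ∀ z : ℂ, ¬ AccPt z (Filter.principal Λ)

lemma divDiff_step (n : ℕ) (ω : ℂ → ℂ) (v : Fin (n+2) → ℂ)
    (h : v (Fin.last (n+1)) ≠ v 0) :
    divDiff n ω (fun i => v i.castSucc) =
      divDiff n ω (fun i => v i.succ) -
        (v (Fin.last (n+1)) - v 0) * divDiff (n+1) ω v := by
  have hd : v (Fin.last (n+1)) - v 0 ≠ 0 := sub_ne_zero.mpr h
  have : divDiff (n+1) ω v =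
      (divDiff n ω (fun i => v i.succ) - divDiff n ω (fun i => v i.castSucc)) /
        (v (Fin.last (n+1)) - v 0) := rfl
  rw [this]
  field_simp
  ring


lemma abs_le_exp (p : ℂ → ℝ) (K : ℝ) (hK : 0 < K)
    (hlog : ∀ z : ℂ, K * Real.log (1 + ‖z‖ ^ 2) ≤ p z) (z : ℂ) :
    ‖z‖ ≤ Real.exp (p z / (2 * K)) := by
  have hp0 : 0 ≤ p z := by
    have h1 : (0:ℝ) ≤ Real.log (1 + ‖z‖ ^ 2) := by
      apply Real.log_nonneg; nlinarith [norm_nonneg z, sq_nonneg (‖z‖)]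
    nlinarith [hlog z]
  rcases le_or_gt (‖z‖) 1 with hz | hz
  · calc ‖z‖ ≤ 1 := hz
      _ = Real.exp 0 := Real.exp_zero.symm
      _ ≤ _ := Real.exp_le_exp.mpr (by positivity)
  · have hpos : 0 < ‖z‖ := lt_trans one_pos hz
    have h1 : Real.log (‖z‖ ^ 2) ≤ Real.log (1 + ‖z‖ ^ 2) :=
      Real.log_le_log (by positivity) (by nlinarith)
    have h2 : (2:ℝ) * Real.log (‖z‖) = Real.log (‖z‖ ^ 2) := by
      rw [Real.log_pow]; push_cast; ring
    have h3 : Real.log (‖z‖) ≤ p z / (2 * K) := by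
      rw [le_div_iff₀ (by positivity)]
      nlinarith [hlog z]
    calc ‖z‖ = Real.exp (Real.log (‖z‖)) := (Real.exp_log hpos).symm
      _ ≤ _ := Real.exp_le_exp.mpr h3

lemma divDiff_tele (n : ℕ) (ω : ℂ → ℂ) (u : ℕ → ℂ) :
    ∀ j : ℕ, (∀ j' < j, u (n+1+j') ≠ u j') →
    ‖divDiff n ω (fun i : Fin (n+1) => u i.val)‖ ≤
      ‖divDiff n ω (fun i : Fin (n+1) => u (i.val + j))‖ +
      ∑ j' ∈ Finset.range j, ‖u (n+1+j') - u j'‖ *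
        ‖divDiff (n+1) ω (fun i : Fin (n+2) => u (i.val + j'))‖ := by
  intro j
  induction j with
  | zero => intro _; simp
  | succ j ih =>
    intro hd
    have hstep := divDiff_step n ω (fun i : Fin (n+2) => u (i.val + j))
      (by
        simpa using hd j (Nat.lt_succ_self j))
    have h1 : (fun i : Fin (n+1) => u (i.val + j)) =
        (fun i : Fin (n+1) => (fun i : Fin (n+2) => u (i.val + j)) i.castSucc) := by
      funext i; simp
    have h2 : (fun i : Fin (n+1) => (fun i : Fin (n+2) => u (i.val + j)) i.succ) =
        (fun i : Fin (n+1) => u (i.val + (j+1))) := by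
      funext i; simp [Fin.val_succ]; ring_nf
    calc ‖divDiff n ω (fun i : Fin (n+1) => u i.val)‖
        ≤ ‖divDiff n ω (fun i : Fin (n+1) => u (i.val + j))‖ +
          ∑ j' ∈ Finset.range j, ‖u (n+1+j') - u j'‖ *
            ‖divDiff (n+1) ω (fun i : Fin (n+2) => u (i.val + j'))‖ :=
          ih (fun j' hj' => hd j' (Nat.lt_succ_of_lt hj'))
      _ ≤ _ := by
          rw [h1, hstep, Finset.sum_range_succ]
          simp only [h2, Fin.val_last, Fin.val_zero, Nat.zero_add]
          have tri := norm_sub_le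
            (divDiff n ω (fun i : Fin (n+1) => u (i.val + (j+1))))
            ((u (n+1+j) - u j) * divDiff (n+1) ω (fun i : Fin (n+2) => u (i.val + j)))
          rw [norm_mul] at tri
          linarith

set_option maxHeartbeats 1000000 in
theorem stmt0 (p : ℂ → ℝ) (hp : IsWeight p) (Λ : Set ℂ)
    (hΛd : DiscreteSet Λ) (hΛ : Λ.Infinite) (n : ℕ) (ω : ℂ → ℂ)
    (h : MemX p Λ (n+1) ω) : MemX p Λ n ω := by
  obtain ⟨hp0, ⟨K, hK, hlog⟩, -⟩ := hp
  obtain ⟨A, hA, B, hB, hX⟩ := h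
  obtain ⟨S, hSΛ, hScard⟩ := hΛ.exists_subset_card_eq (2*n+2)
  have hSne : S.Nonempty := by rw [← Finset.card_pos, hScard]; omega
  have hne : Nonempty {x // x ∈ S} := hSne.to_subtype
  set P := S.sup' hSne p with hPdef
  have hPle : ∀ x ∈ S, p x ≤ P := fun x hx => Finset.le_sup' p hx
  have hP0 : 0 ≤ P := le_trans (hp0 hSne.choose) (hPle _ hSne.choose_spec)
  obtain ⟨f₀, hM⟩ := Finite.exists_max
    (fun f : Fin (n+1) → {x // x ∈ S} => ‖divDiff n ω (fun i => (f i : ℂ))‖)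
  set M := ‖divDiff n ω (fun i => (f₀ i : ℂ))‖ with hMdef
  have hM0 : 0 ≤ M := norm_nonneg _
  set B0 : ℝ := 1/(2*K) + B*(n+2) with hB0def
  have hB0 : 0 < B0 := by positivity
  set C : ℝ := (n+1) * ((Real.exp (P/(2*K)) + 1) * (A * Real.exp (B*(n+2)*P))) with hCdef
  have hC : 0 < C := by positivity
  refine ⟨M + C + 1, by positivity, B0, hB0, ?_⟩
  intro z hzΛ hzinj
  set Sp := ∑ i, p (z i) with hSpdef
  have hSp0 : 0 ≤ Sp := Finset.sum_nonneg fun i _ => hp0 _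
  have hSple : ∀ i, p (z i) ≤ Sp := fun i =>
    Finset.single_le_sum (f := fun i => p (z i)) (fun i _ => hp0 _) (Finset.mem_univ i)
  -- choose the fixed points
  have hcard : n+1 ≤ (S \ Finset.image z Finset.univ).card := by
    have h1 := Finset.le_card_sdiff (Finset.image z Finset.univ) S
    have h2 : (Finset.image z Finset.univ).card ≤ n+1 := by
      calc (Finset.image z Finset.univ).card ≤ (Finset.univ : Finset (Fin (n+1))).card :=
            Finset.card_image_le
        _ = n+1 := by simp
    omega
  obtain ⟨T, hTsub, hTcard⟩ := Finset.exists_subset_card_eq hcard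
  set lam : Fin (n+1) → ℂ := fun i => (((T.equivFinOfCardEq hTcard).symm i : {x // x ∈ T}) : ℂ)
    with hlamdef
  have hlamT : ∀ i, lam i ∈ T := fun i => ((T.equivFinOfCardEq hTcard).symm i).2
  have hlamS : ∀ i, lam i ∈ S := fun i => (Finset.mem_sdiff.mp (hTsub (hlamT i))).1
  have hlamz : ∀ i k, lam i ≠ z k := by
    intro i k hik
    exact (Finset.mem_sdiff.mp (hTsub (hlamT i))).2
      (Finset.mem_image.mpr ⟨k, Finset.mem_univ k, hik.symm⟩)
  have hlaminj : Function.Injective lam := by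
    intro a b hab
    exact (T.equivFinOfCardEq hTcard).symm.injective (Subtype.ext hab)
  set u : ℕ → ℂ := fun m =>
    if h : m < n+1 then z ⟨m, h⟩
    else if h2 : m - (n+1) < n+1 then lam ⟨m - (n+1), h2⟩ else 0 with hudef
  have hu1 : ∀ m (h : m < n+1), u m = z ⟨m, h⟩ := by
    intro m h; simp only [hudef]; rw [dif_pos h]
  have hu2 : ∀ m (h1 : n+1 ≤ m) (h2 : m < 2*n+2), u m = lam ⟨m - (n+1), by omega⟩ := by
    intro m h1 h2; simp only [hudef]; rw [dif_neg (by omega), dif_pos (by omega)]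
  have huΛ : ∀ m, m < 2*n+2 → u m ∈ Λ := by
    intro m hm
    rcases lt_or_ge m (n+1) with h | h
    · rw [hu1 m h]; exact hzΛ _
    · rw [hu2 m h hm]; exact hSΛ (hlamS _)
  have hup : ∀ m, m < 2*n+2 → p (u m) ≤ P + Sp := by
    intro m hm
    rcases lt_or_ge m (n+1) with h | h
    · rw [hu1 m h]; have := hSple ⟨m, h⟩; linarith
    · rw [hu2 m h hm]; have := hPle _ (hlamS ⟨m - (n+1), by omega⟩); linarith
  have huinj : ∀ m1, m1 < 2*n+2 → ∀ m2, m2 < 2*n+2 → u m1 = u m2 → m1 = m2 := by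
    intro m1 hm1 m2 hm2 he
    rcases lt_or_ge m1 (n+1) with h1 | h1 <;> rcases lt_or_ge m2 (n+1) with h2 | h2
    · rw [hu1 m1 h1, hu1 m2 h2] at he
      exact congrArg Fin.val (hzinj he)
    · rw [hu1 m1 h1, hu2 m2 h2 hm2] at he
      exact absurd he.symm (hlamz _ _)
    · rw [hu2 m1 h1 hm1, hu1 m2 h2] at he
      exact absurd he (hlamz _ _)
    · rw [hu2 m1 h1 hm1, hu2 m2 h2 hm2] at he
      have := congrArg Fin.val (hlaminj he)
      simp only [] at this
      omega
  have hdist : ∀ j' < n+1, u (n+1+j') ≠ u j' := by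
    intro j' hj' he
    have := huinj _ (by omega) _ (by omega) he
    omega
  have tele := divDiff_tele n ω u (n+1) hdist
  have hz' : (fun i : Fin (n+1) => u i.val) = z := by
    funext i; rw [hu1 i.val i.isLt]
  have hlam' : (fun i : Fin (n+1) => u (i.val + (n+1))) = lam := by
    funext i
    rw [hu2 (i.val + (n+1)) (by omega) (by omega)]
    exact congrArg lam (Fin.ext (by simp))
  rw [hz', hlam'] at tele
  -- base term
  have hbase : ‖divDiff n ω lam‖ ≤ M := by
    have := hM (fun i => ⟨lam i, hlamS i⟩)
    simpa using this
  -- the summands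
  have hterm : ∀ j' ∈ Finset.range (n+1),
      ‖u (n+1+j') - u j'‖ *
        ‖divDiff (n+1) ω (fun i : Fin (n+2) => u (i.val + j'))‖ ≤
      ((Real.exp (P/(2*K)) + 1) * Real.exp (Sp/(2*K))) *
        (A * Real.exp (B * ((n+2) * (P + Sp)))) := by
    intro j' hj'
    have hj'lt : j' < n+1 := Finset.mem_range.mp hj'
    have hfac1 : ‖u (n+1+j') - u j'‖ ≤
        (Real.exp (P/(2*K)) + 1) * Real.exp (Sp/(2*K)) := by
      rw [hu2 (n+1+j') (by omega) (by omega), hu1 j' hj'lt]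
      have e1 : ‖lam ⟨n+1+j'-(n+1), by omega⟩‖ ≤ Real.exp (P/(2*K)) := by
        refine le_trans (abs_le_exp p K hK hlog _) (Real.exp_le_exp.mpr ?_)
        have := hPle _ (hlamS ⟨n+1+j'-(n+1), by omega⟩)
        gcongr
      have e2 : ‖z ⟨j', hj'lt⟩‖ ≤ Real.exp (Sp/(2*K)) := by
        refine le_trans (abs_le_exp p K hK hlog _) (Real.exp_le_exp.mpr ?_)
        have := hSple ⟨j', hj'lt⟩
        gcongr
      have e3 : (1:ℝ) ≤ Real.exp (Sp/(2*K)) := by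
        rw [show (1:ℝ) = Real.exp 0 from Real.exp_zero.symm]
        exact Real.exp_le_exp.mpr (by positivity)
      have tri := norm_sub_le
        (lam ⟨n+1+j'-(n+1), by omega⟩) (z ⟨j', hj'lt⟩)
      nlinarith [Real.exp_pos (P/(2*K)), Real.exp_pos (Sp/(2*K)),
        norm_nonneg (lam ⟨n+1+j'-(n+1), by omega⟩), norm_nonneg (z ⟨j', hj'lt⟩)]
    have hfac2 : ‖divDiff (n+1) ω (fun i : Fin (n+2) => u (i.val + j'))‖ ≤
        A * Real.exp (B * ((n+2) * (P + Sp))) := by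
      have hmem : ∀ i : Fin (n+2), u (i.val + j') ∈ Λ := fun i => huΛ _ (by omega)
      have hinj : Function.Injective (fun i : Fin (n+2) => u (i.val + j')) := by
        intro a b hab
        have := huinj _ (by omega) _ (by omega) hab
        exact Fin.ext (by omega)
      refine le_trans (hX _ hmem hinj) ?_
      have hsum : ∑ i : Fin (n+2), p (u (i.val + j')) ≤ (n+2) * (P + Sp) := by
        calc ∑ i : Fin (n+2), p (u (i.val + j')) ≤ ∑ _i : Fin (n+2), (P + Sp) :=
              Finset.sum_le_sum fun i _ => hup _ (by omega)
          _ = (n+2) * (P + Sp) := by simp [Finset.sum_const]; ring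
      have := mul_le_mul_of_nonneg_left hsum hB.le
      gcongr
    exact mul_le_mul hfac1 hfac2 (norm_nonneg _) (by positivity)
  have hsum : ∑ j' ∈ Finset.range (n+1), ‖u (n+1+j') - u j'‖ *
        ‖divDiff (n+1) ω (fun i : Fin (n+2) => u (i.val + j'))‖ ≤
      (n+1) * (((Real.exp (P/(2*K)) + 1) * Real.exp (Sp/(2*K))) *
        (A * Real.exp (B * ((n+2) * (P + Sp))))) := by
    have := Finset.sum_le_card_nsmul (Finset.range (n+1)) _ _ hterm
    simpa [Finset.card_range, nsmul_eq_mul] using this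
  -- combine exponentials
  have hexp : Real.exp (Sp/(2*K)) * Real.exp (B * ((n+2) * (P + Sp))) =
      Real.exp (B*(n+2)*P) * Real.exp (B0 * Sp) := by
    rw [← Real.exp_add, ← Real.exp_add, hB0def]
    congr 1
    ring
  have hexp1 : (1:ℝ) ≤ Real.exp (B0 * Sp) := by
    rw [show (1:ℝ) = Real.exp 0 from Real.exp_zero.symm]
    exact Real.exp_le_exp.mpr (by positivity)
  have key : (n+1) * (((Real.exp (P/(2*K)) + 1) * Real.exp (Sp/(2*K))) *
      (A * Real.exp (B * ((n+2) * (P + Sp))))) = C * Real.exp (B0 * Sp) := by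
    have h' : ((n:ℝ)+1) * (((Real.exp (P/(2*K)) + 1) * Real.exp (Sp/(2*K))) *
        (A * Real.exp (B * ((n+2) * (P + Sp))))) =
        ((n:ℝ)+1) * ((Real.exp (P/(2*K)) + 1) * (A *
          (Real.exp (Sp/(2*K)) * Real.exp (B * ((n+2) * (P + Sp)))))) := by ring
    rw [h', hexp, hCdef]
    push_cast
    ring
  calc ‖divDiff n ω z‖ ≤ M + (n+1) * (((Real.exp (P/(2*K)) + 1) *
        Real.exp (Sp/(2*K))) * (A * Real.exp (B * ((n+2) * (P + Sp))))) := by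
        refine le_trans tele ?_; linarith
    _ = M + C * Real.exp (B0 * Sp) := by rw [key]
    _ ≤ (M + C + 1) * Real.exp (B0 * Sp) := by nlinarith [hexp1, hM0, hC]
end

section
/- For every entire function f in the Hörmander algebra A_p and every j ≥ 1, the divided differences of order j−1 of f satisfy |Δ^{j-1}f(z₁,…,z_j)| ≤ A e^{B[p(z₁)+⋯+p(z_j)]} for all tuples of distinct points (z₁,…,z_j) ∈ ℂ^j, for some constants A,B > 0 depending on f and j. -/
open Complex Metric Set

set_option maxHeartbeats 1000000 in
private lemma divDiff_eq_sum (f : ℂ → ℂ) : ∀ (k : ℕ) (z : Fin (k+1) → ℂ), Function.Injective z →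
    divDiff k f z = ∑ i, f (z i) * (∏ j, if j = i then 1 else (z i - z j))⁻¹
  | 0, z, _ => by simp [divDiff]
  | (k+1), z, hz => by
    have hzs : Function.Injective (fun i : Fin (k+1) => z i.succ) :=
      hz.comp (Fin.succ_injective _)
    have hzc : Function.Injective (fun i : Fin (k+1) => z i.castSucc) :=
      hz.comp (Fin.castSucc_injective _)
    rw [divDiff, divDiff_eq_sum f k _ hzs, divDiff_eq_sum f k _ hzc]
    have h1 : ∑ m : Fin (k+2), f (z m) * (∏ j, if j = m then 1 else (z m - z j))⁻¹ * (z m - z 0)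
        = ∑ i : Fin (k+1), f (z i.succ) *
          (∏ j : Fin (k+1), if j = i then 1 else (z i.succ - z j.succ))⁻¹ := by
      rw [Fin.sum_univ_succ]
      simp only [sub_self, mul_zero, zero_add]
      refine Finset.sum_congr rfl fun i _ => ?_
      have ha : z i.succ - z 0 ≠ 0 := sub_ne_zero.2 (hz.ne (Fin.succ_ne_zero i))
      have hP : (∏ j : Fin (k+1), if j = i then 1 else (z i.succ - z j.succ)) ≠ 0 := by
        refine Finset.prod_ne_zero_iff.2 fun j _ => ?_
        split_ifs with h
        · exact one_ne_zero
        · exact sub_ne_zero.2 (hz.ne (fun hh => h (Fin.succ_injective _ hh).symm))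
      have hsplit : (∏ j : Fin (k+2), if j = i.succ then 1 else (z i.succ - z j))
          = (z i.succ - z 0) *
            ∏ j : Fin (k+1), if j = i then 1 else (z i.succ - z j.succ) := by
        rw [Fin.prod_univ_succ]
        congr 1
        all_goals first
          | rw [if_neg (Ne.symm (Fin.succ_ne_zero i))]
          | exact Finset.prod_congr rfl fun j _ => by simp [Fin.succ_inj]
      rw [hsplit, mul_inv]
      field_simp
    have h2 : ∑ m : Fin (k+2), f (z m) * (∏ j, if j = m then 1 else (z m - z j))⁻¹ *
          (z m - z (Fin.last (k+1)))
        = ∑ i : Fin (k+1), f (z i.castSucc) *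
          (∏ j : Fin (k+1), if j = i then 1 else (z i.castSucc - z j.castSucc))⁻¹ := by
      rw [Fin.sum_univ_castSucc]
      simp only [sub_self, mul_zero, add_zero]
      refine Finset.sum_congr rfl fun i _ => ?_
      have hlt : i.castSucc ≠ Fin.last (k+1) := (Fin.castSucc_lt_last i).ne
      have ha : z i.castSucc - z (Fin.last (k+1)) ≠ 0 := sub_ne_zero.2 (hz.ne hlt)
      have hP : (∏ j : Fin (k+1), if j = i then 1 else (z i.castSucc - z j.castSucc)) ≠ 0 := by
        refine Finset.prod_ne_zero_iff.2 fun j _ => ?_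
        split_ifs with h
        · exact one_ne_zero
        · exact sub_ne_zero.2 (hz.ne (fun hh => h (Fin.castSucc_injective _ hh).symm))
      have hsplit : (∏ j : Fin (k+2), if j = i.castSucc then 1 else (z i.castSucc - z j))
          = (∏ j : Fin (k+1), if j = i then 1 else (z i.castSucc - z j.castSucc)) *
            (z i.castSucc - z (Fin.last (k+1))) := by
        rw [Fin.prod_univ_castSucc]
        congr 1
        all_goals first
          | rw [if_neg (Ne.symm hlt)]
          | exact Finset.prod_congr rfl fun j _ => by simp [Fin.castSucc_inj]
      rw [hsplit, mul_inv]
      field_simp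
    rw [← h1, ← h2, ← Finset.sum_sub_distrib]
    have hd : z (Fin.last (k+1)) - z 0 ≠ 0 := by
      refine sub_ne_zero.2 (hz.ne ?_)
      simp [Fin.ext_iff]
    have hterm : ∀ m : Fin (k+2), f (z m) * (∏ j, if j = m then 1 else (z m - z j))⁻¹ *
          (z m - z 0) - f (z m) * (∏ j, if j = m then 1 else (z m - z j))⁻¹ *
          (z m - z (Fin.last (k+1)))
        = f (z m) * (∏ j, if j = m then 1 else (z m - z j))⁻¹ *
          (z (Fin.last (k+1)) - z 0) := by
      intro m; ring
    rw [Finset.sum_congr rfl (fun m _ => hterm m), ← Finset.sum_mul,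
      mul_div_assoc, div_self hd, mul_one]

set_option maxHeartbeats 1000000 in
private lemma divDiff_comp_perm (f : ℂ → ℂ) (k : ℕ) (z : Fin (k+1) → ℂ) (hz : Function.Injective z)
    (σ : Equiv.Perm (Fin (k+1))) : divDiff k f (z ∘ σ) = divDiff k f z := by
  rw [divDiff_eq_sum f k _ (hz.comp σ.injective), divDiff_eq_sum f k z hz]
  refine Fintype.sum_equiv σ _ _ fun i => ?_
  simp only [Function.comp_apply]
  congr 1
  congr 1
  refine Fintype.prod_equiv σ _ _ fun j => ?_
  simp [σ.injective.eq_iff]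

set_option maxHeartbeats 1000000 in
private lemma partial_fractions (k : ℕ) (z : Fin (k+1) → ℂ) (hz : Function.Injective z) (ζ : ℂ)
    (hζ : ∀ i, ζ ≠ z i) :
    ∑ i, (∏ j, if j = i then 1 else (z i - z j))⁻¹ * (ζ - z i)⁻¹
      = (∏ j, (ζ - z j))⁻¹ := by
  have hQ : (∏ j, (ζ - z j)) ≠ 0 :=
    Finset.prod_ne_zero_iff.2 fun j _ => sub_ne_zero.2 (hζ j)
  have h1 : ∑ i, Polynomial.eval ζ (Lagrange.basis Finset.univ z i) = 1 := by
    rw [← Polynomial.eval_finset_sum,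
      Lagrange.sum_basis (Function.Injective.injOn hz) Finset.univ_nonempty,
      Polynomial.eval_one]
  have hterm : ∀ i : Fin (k+1),
      (∏ j, if j = i then 1 else (z i - z j))⁻¹ * (ζ - z i)⁻¹ * (∏ j, (ζ - z j))
        = Polynomial.eval ζ (Lagrange.basis Finset.univ z i) := by
    intro i
    have e1 : (∏ j, if j = i then 1 else (z i - z j))
        = ∏ j ∈ Finset.univ.erase i, (z i - z j) := by
      rw [← Finset.mul_prod_erase Finset.univ _ (Finset.mem_univ i), if_pos rfl, one_mul]
      exact Finset.prod_congr rfl fun j hj => if_neg (Finset.ne_of_mem_erase hj)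
    have e2 : (∏ j, (ζ - z j)) = (ζ - z i) * ∏ j ∈ Finset.univ.erase i, (ζ - z j) :=
      (Finset.mul_prod_erase Finset.univ _ (Finset.mem_univ i)).symm
    have e3 : Polynomial.eval ζ (Lagrange.basis Finset.univ z i)
        = ∏ j ∈ Finset.univ.erase i, ((z i - z j)⁻¹ * (ζ - z j)) := by
      rw [Lagrange.basis, Polynomial.eval_prod]
      exact Finset.prod_congr rfl fun j _ => by
        simp [Lagrange.basisDivisor]
    have hzi : ζ - z i ≠ 0 := sub_ne_zero.2 (hζ i)
    rw [e1, e2, e3, Finset.prod_mul_distrib, ← Finset.prod_inv_distrib,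
      mul_assoc, inv_mul_cancel_left₀ hzi]
  have h2 : (∑ i, (∏ j, if j = i then 1 else (z i - z j))⁻¹ * (ζ - z i)⁻¹) *
      (∏ j, (ζ - z j)) = 1 := by
    rw [Finset.sum_mul]
    rw [Finset.sum_congr rfl fun i _ => hterm i]
    exact h1
  field_simp at h2 ⊢
  linear_combination h2

set_option maxHeartbeats 1000000 in
private lemma circleIntegral_finset_sum {ι : Type*} (s : Finset ι) (g : ι → ℂ → ℂ) (c : ℂ) (R : ℝ)
    (h : ∀ i ∈ s, CircleIntegrable (g i) c R) :
    (∮ ζ in C(c, R), ∑ i ∈ s, g i ζ) = ∑ i ∈ s, ∮ ζ in C(c, R), g i ζ := by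
  simp only [circleIntegral]
  rw [show (fun θ => deriv (circleMap c R) θ • ∑ i ∈ s, g i (circleMap c R θ))
      = fun θ => ∑ i ∈ s, deriv (circleMap c R) θ • g i (circleMap c R θ) from
    funext fun θ => Finset.smul_sum]
  have h' : ∀ i ∈ s, IntervalIntegrable
      (fun θ => deriv (circleMap c R) θ • g i (circleMap c R θ))
      MeasureTheory.volume 0 (2 * Real.pi) := fun i hi => (h i hi).out
  exact intervalIntegral.integral_finset_sum h'

set_option maxHeartbeats 1000000 in
private lemma contour_bound (f : ℂ → ℂ) (hf : Differentiable ℂ f) (k : ℕ) (z : Fin (k+1) → ℂ)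
    (hz : Function.Injective z) (c : ℂ) (hc : ∀ i, ‖z i - c‖ ≤ 1)
    (M : ℝ) (hM : ∀ ζ ∈ sphere c 2, ‖f ζ‖ ≤ M) :
    ‖divDiff k f z‖ ≤ 2 * M := by
  have hball : ∀ i, z i ∈ ball c 2 := by
    intro i
    rw [mem_ball, dist_eq]
    exact lt_of_le_of_lt (hc i) one_lt_two
  have hsph : ∀ ζ ∈ sphere c 2, ∀ i, 1 ≤ ‖ζ - z i‖ := by
    intro ζ hζ i
    have h1 : ‖ζ - c‖ = 2 := by rwa [mem_sphere, dist_eq] at hζ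
    have h2 : ‖ζ - c‖ ≤ ‖ζ - z i‖ + ‖z i - c‖ := by
      simpa using norm_add_le (ζ - z i) (z i - c)
    linarith [hc i]
  have hne : ∀ ζ ∈ sphere c 2, ∀ i, ζ ≠ z i := by
    intro ζ hζ i h
    have := hsph ζ hζ i
    rw [h, sub_self] at this
    rw [norm_zero] at this
    linarith
  -- Cauchy formula for each node
  have hcau : ∀ i, (∮ ζ in C(c, 2), (ζ - z i)⁻¹ * f ζ) = (2 * Real.pi * I) * f (z i) := by
    intro i
    have := (hf.diffContOnCl (s := ball c 2)).circleIntegral_sub_inv_smul (hball i)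
    simpa [smul_eq_mul] using this
  set F : Fin (k+1) → ℂ := fun m => (∏ j, if j = m then 1 else (z m - z j))⁻¹ with hFdef
  have hint : ∀ i : Fin (k+1), CircleIntegrable (fun ζ => F i * ((ζ - z i)⁻¹ * f ζ)) c 2 := by
    intro i
    apply ContinuousOn.circleIntegrable (by norm_num : (0:ℝ) ≤ 2)
    refine ContinuousOn.mul continuousOn_const (ContinuousOn.mul ?_ hf.continuous.continuousOn)
    refine ContinuousOn.inv₀ ((continuousOn_id.sub continuousOn_const)) ?_
    intro ζ hζ
    exact sub_ne_zero.2 (hne ζ hζ i)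
  have hkey : (∮ ζ in C(c, 2), (∏ j, (ζ - z j))⁻¹ * f ζ)
      = (2 * Real.pi * I) * divDiff k f z := by
    have e1 : (∮ ζ in C(c, 2), (∏ j, (ζ - z j))⁻¹ * f ζ)
        = ∮ ζ in C(c, 2), ∑ i, F i * ((ζ - z i)⁻¹ * f ζ) := by
      refine circleIntegral.integral_congr (by norm_num) fun ζ hζ => ?_
      rw [← partial_fractions k z hz ζ (hne ζ hζ)]
      rw [Finset.sum_mul]
      exact Finset.sum_congr rfl fun i _ => by rw [hFdef]; ring
    rw [e1, circleIntegral_finset_sum _ _ _ _ (fun i _ => hint i)]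
    have e2 : ∀ i : Fin (k+1), (∮ ζ in C(c, 2), F i * ((ζ - z i)⁻¹ * f ζ))
        = F i * ((2 * Real.pi * I) * f (z i)) := by
      intro i
      rw [← hcau i]
      have := circleIntegral.integral_smul (𝕜 := ℂ) (F i) (fun ζ => (ζ - z i)⁻¹ * f ζ) c 2
      simpa [smul_eq_mul] using this
    rw [Finset.sum_congr rfl fun i _ => e2 i]
    rw [divDiff_eq_sum f k z hz, Finset.mul_sum]
    exact Finset.sum_congr rfl fun i _ => by rw [hFdef]; ring
  have hbound : ‖(2 * Real.pi * I) * divDiff k f z‖ ≤ 2 * Real.pi * 2 * M := by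
    rw [← hkey]
    have : ∀ ζ ∈ sphere c 2, ‖(∏ j, (ζ - z j))⁻¹ * f ζ‖ ≤ M := by
      intro ζ hζ
      rw [norm_mul, norm_inv]
      have h1 : (1:ℝ) ≤ ‖∏ j, (ζ - z j)‖ := by
        rw [norm_prod]
        have := Finset.prod_le_prod (s := Finset.univ)
          (f := fun _ : Fin (k+1) => (1:ℝ)) (g := fun j => ‖ζ - z j‖)
          (fun j _ => by norm_num)
          (fun j _ => by simpa using hsph ζ hζ j)
        simpa using this
      have hM' : (0:ℝ) ≤ M := le_trans (norm_nonneg _) (hM ζ hζ)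
      calc ‖∏ j, (ζ - z j)‖⁻¹ * ‖f ζ‖ ≤ 1 * M := by
            refine mul_le_mul ?_ (by simpa using hM ζ hζ)
              (norm_nonneg _) zero_le_one
            exact inv_le_one_of_one_le₀ h1
        _ = M := one_mul M
    simpa using
      circleIntegral.norm_integral_le_of_norm_le_const (by norm_num : (0:ℝ) ≤ 2) this
  have habs : ‖(2 * Real.pi * I) * divDiff k f z‖
      = (2 * Real.pi) * ‖divDiff k f z‖ := by
    rw [norm_mul, norm_mul, norm_mul, Complex.norm_I, Complex.norm_two, Complex.norm_real, Real.norm_eq_abs,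
      _root_.abs_of_pos Real.pi_pos, mul_one]
  rw [habs] at hbound
  have hπ : 0 < Real.pi := Real.pi_pos
  nlinarith [norm_nonneg (divDiff k f z)]


set_option maxHeartbeats 1000000 in
theorem stmt1 (p : ℂ → ℝ) (hp : IsWeight p) (f : ℂ → ℂ) (hf : MemAp p f) (k : ℕ) :
    ∃ A > 0, ∃ B > 0, ∀ z : Fin (k+1) → ℂ, Function.Injective z →
      ‖divDiff k f z‖ ≤ A * Real.exp (B * ∑ i, p (z i)) := by
  obtain ⟨hp0, -, D, hD, E, hE, hDE⟩ := hp
  obtain ⟨hdiff, A0, hA0, B0, hB0, hfb⟩ := hf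
  induction k with
  | zero =>
    refine ⟨A0, hA0, B0, hB0, fun z _ => ?_⟩
    simpa [divDiff, Fin.sum_univ_one] using hfb (z 0)
  | succ k ih =>
    obtain ⟨A, hA, B, hB, hbound⟩ := ih
    refine ⟨2*A + 2*A0*Real.exp (B0*(D*E+E)), by positivity, B + B0*(D*D), by positivity, ?_⟩
    intro z hzinj
    have hsum0 : (0:ℝ) ≤ ∑ i, p (z i) := Finset.sum_nonneg fun i _ => hp0 _
    by_cases hfar : ∃ i j, 1 < ‖z i - z j‖
    · obtain ⟨i, j, hij1⟩ := hfar
      have hij : i ≠ j := by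
        rintro rfl
        simp only [sub_self, norm_zero] at hij1
        linarith
      set τ : Equiv.Perm (Fin (k+2)) := Equiv.swap 0 i with hτ
      have hj' : τ j ≠ 0 := by
        intro h
        apply hij
        have : j = τ 0 := by
          conv_lhs => rw [← Equiv.swap_apply_self 0 i j]
          rw [← hτ, h]
        rw [this, hτ, Equiv.swap_apply_left]
      have hlast0 : (Fin.last (k+1)) ≠ (0 : Fin (k+2)) := by simp [Fin.ext_iff]
      set σ : Equiv.Perm (Fin (k+2)) := τ * Equiv.swap (Fin.last (k+1)) (τ j) with hσ
      have hσ0 : σ 0 = i := by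
        rw [hσ, Equiv.Perm.mul_apply,
          Equiv.swap_apply_of_ne_of_ne (Ne.symm hlast0) (Ne.symm hj'), hτ,
          Equiv.swap_apply_left]
      have hσl : σ (Fin.last (k+1)) = j := by
        rw [hσ, Equiv.Perm.mul_apply, Equiv.swap_apply_left, hτ, Equiv.swap_apply_self]
      set w : Fin (k+2) → ℂ := z ∘ σ with hwdef
      have hw : Function.Injective w := hzinj.comp σ.injective
      have hsum : ∑ m, p (w m) = ∑ m, p (z m) := Equiv.sum_comp σ (fun m => p (z m))
      rw [← divDiff_comp_perm f (k+1) z hzinj σ, ← hwdef]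
      have hden : 1 < ‖w (Fin.last (k+1)) - w 0‖ := by
        show 1 < ‖z (σ (Fin.last (k+1))) - z (σ 0)‖
        rw [hσl, hσ0, norm_sub_rev]
        exact hij1
      have h1 := hbound (fun m => w m.succ) (hw.comp (Fin.succ_injective _))
      have h2 := hbound (fun m => w m.castSucc) (hw.comp (Fin.castSucc_injective _))
      have hs1 : ∑ m : Fin (k+1), p (w m.succ) ≤ ∑ m, p (z m) := by
        rw [← hsum]
        conv_rhs => rw [Fin.sum_univ_succ]
        have := hp0 (w 0); linarith
      have hs2 : ∑ m : Fin (k+1), p (w m.castSucc) ≤ ∑ m, p (z m) := by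
        rw [← hsum]
        conv_rhs => rw [Fin.sum_univ_castSucc]
        have := hp0 (w (Fin.last (k+1))); linarith
      have hnum : ‖divDiff k f (fun m => w m.succ) -
          divDiff k f (fun m => w m.castSucc)‖ ≤ 2 * A * Real.exp (B * ∑ m, p (z m)) := by
        have t1 : ‖divDiff k f (fun m => w m.succ)‖ ≤
            A * Real.exp (B * ∑ m, p (z m)) := by
          refine le_trans h1 (mul_le_mul_of_nonneg_left (Real.exp_le_exp.2 ?_) hA.le)
          exact mul_le_mul_of_nonneg_left hs1 hB.le
        have t2 : ‖divDiff k f (fun m => w m.castSucc)‖ ≤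
            A * Real.exp (B * ∑ m, p (z m)) := by
          refine le_trans h2 (mul_le_mul_of_nonneg_left (Real.exp_le_exp.2 ?_) hA.le)
          exact mul_le_mul_of_nonneg_left hs2 hB.le
        calc ‖divDiff k f (fun m => w m.succ) - divDiff k f (fun m => w m.castSucc)‖
            ≤ ‖divDiff k f (fun m => w m.succ)‖ +
              ‖divDiff k f (fun m => w m.castSucc)‖ := by
              simpa using
                norm_sub_le (divDiff k f (fun m => w m.succ)) (divDiff k f (fun m => w m.castSucc))
          _ ≤ 2 * A * Real.exp (B * ∑ m, p (z m)) := by linarith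
      rw [divDiff, norm_div]
      have hnn : (0:ℝ) ≤ ‖divDiff k f (fun m => w m.succ) -
          divDiff k f (fun m => w m.castSucc)‖ := norm_nonneg _
      calc ‖divDiff k f (fun m => w m.succ) - divDiff k f (fun m => w m.castSucc)‖ /
            ‖w (Fin.last (k+1)) - w 0‖
          ≤ ‖divDiff k f (fun m => w m.succ) - divDiff k f (fun m => w m.castSucc)‖ :=
            div_le_self hnn hden.le
        _ ≤ 2 * A * Real.exp (B * ∑ m, p (z m)) := hnum
        _ ≤ (2*A + 2*A0*Real.exp (B0*(D*E+E))) *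
              Real.exp ((B + B0*(D*D)) * ∑ m, p (z m)) := by
            have e1 : Real.exp (B * ∑ m, p (z m)) ≤
                Real.exp ((B + B0*(D*D)) * ∑ m, p (z m)) := by
              refine Real.exp_le_exp.2 ?_
              nlinarith [mul_nonneg (mul_nonneg hB0.le (mul_nonneg hD.le hD.le)) hsum0]
            have e2 : (0:ℝ) < 2*A0*Real.exp (B0*(D*E+E)) := by positivity
            nlinarith [Real.exp_pos (B * ∑ m, p (z m)),
              Real.exp_pos ((B + B0*(D*D)) * ∑ m, p (z m))]
    · push_neg at hfar
      have hc : ∀ m, ‖z m - z 0‖ ≤ 1 := fun m => hfar m 0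
      have hM : ∀ ζ ∈ sphere (z 0) 2, ‖f ζ‖ ≤
          A0 * Real.exp (B0 * (D*(D*p (z 0)+E)+E)) := by
        intro ζ hζ
        have hd2 : ‖ζ - z 0‖ = 2 := by rwa [mem_sphere, dist_eq] at hζ
        have e0 : ζ - (ζ + z 0)/2 = (ζ - z 0)/2 := by ring
        have e0' : (ζ + z 0)/2 - z 0 = (ζ - z 0)/2 := by ring
        have habs2 : ‖(ζ - z 0)/2‖ ≤ 1 := by
          rw [norm_div, hd2]
          norm_num
        have hpζ : p ζ ≤ D * p ((ζ + z 0)/2) + E := hDE ζ _ (by rw [e0]; exact habs2)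
        have hpw : p ((ζ + z 0)/2) ≤ D * p (z 0) + E := hDE _ _ (by rw [e0']; exact habs2)
        calc ‖f ζ‖ ≤ A0 * Real.exp (B0 * p ζ) := hfb ζ
          _ ≤ A0 * Real.exp (B0 * (D*(D*p (z 0)+E)+E)) := by
            refine mul_le_mul_of_nonneg_left (Real.exp_le_exp.2 ?_) hA0.le
            have hmul := mul_le_mul_of_nonneg_left hpw hD.le
            nlinarith
      have hcb := contour_bound f hdiff (k+1) z hzinj (z 0) hc _ hM
      refine le_trans hcb ?_
      have hp0z : p (z 0) ≤ ∑ m, p (z m) := by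
        rw [Fin.sum_univ_succ]
        have : (0:ℝ) ≤ ∑ m : Fin (k+1), p (z m.succ) :=
          Finset.sum_nonneg fun m _ => hp0 _
        linarith
      have key : B0*(D*(D*p (z 0)+E)+E) = B0*(D*E+E) + B0*(D*D)*p (z 0) := by ring
      rw [key, Real.exp_add]
      have hexp : Real.exp (B0*(D*D)*p (z 0)) ≤
          Real.exp ((B + B0*(D*D)) * ∑ m, p (z m)) := by
        refine Real.exp_le_exp.2 ?_
        have h1 : B0*(D*D)*p (z 0) ≤ B0*(D*D) * ∑ m, p (z m) :=
          mul_le_mul_of_nonneg_left hp0z (by positivity)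
        nlinarith [mul_nonneg hB.le hsum0]
      calc 2 * (A0 * (Real.exp (B0*(D*E+E)) * Real.exp (B0*(D*D)*p (z 0))))
          = (2*A0*Real.exp (B0*(D*E+E))) * Real.exp (B0*(D*D)*p (z 0)) := by ring
        _ ≤ (2*A + 2*A0*Real.exp (B0*(D*E+E))) *
              Real.exp ((B + B0*(D*D)) * ∑ m, p (z m)) := by
            have hpos : (0:ℝ) < 2*A0*Real.exp (B0*(D*E+E)) := by positivity
            have h2A : (0:ℝ) < 2*A := by positivity
            nlinarith [Real.exp_pos (B0*(D*D)*p (z 0)),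
              Real.exp_pos ((B + B0*(D*D)) * ∑ m, p (z m))]
end

section
/- If Λ is a discrete sequence in ℂ and f ∈ A_p, then the restriction of f to Λ lies in X^{n-1}_p(Λ) for every n ≥ 1; that is, R_Λ(A_p) ⊆ X^{n-1}_p(Λ). -/
open Complex Metric Set

lemma divDiff_circleInt (f : ℂ → ℂ) (hf : Differentiable ℂ f) :
    ∀ (k : ℕ) (c : ℂ) (R : ℝ) (z : Fin (k+1) → ℂ), Function.Injective z →
      (∀ i, z i ∈ ball c R) →
      divDiff k f z = (2 * Real.pi * I)⁻¹ * ∮ w in C(c, R), (∏ i, (w - z i))⁻¹ * f w := by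
  intro k
  induction k with
  | zero =>
    intro c R z _ hb
    have h := Complex.two_pi_I_inv_smul_circleIntegral_sub_inv_smul_of_differentiable_on_off_countable
      (s := (∅ : Set ℂ)) countable_empty (hb 0) hf.continuous.continuousOn
      (fun x _ => hf.differentiableAt)
    have hR : 0 ≤ R := le_of_lt (dist_nonneg.trans_lt (hb 0))
    have hcongr : (∮ w in C(c, R), (∏ i : Fin 1, (w - z i))⁻¹ * f w)
        = ∮ w in C(c, R), (w - z 0)⁻¹ • f w := by
      refine circleIntegral.integral_congr hR (fun w _ => ?_)
      simp [Fin.prod_univ_one, smul_eq_mul]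
    rw [show divDiff 0 f z = f (z 0) from rfl, ← h, hcongr, smul_eq_mul]
  | succ k IH =>
    intro c R z hz hb
    have hR : 0 ≤ R := le_of_lt (dist_nonneg.trans_lt (hb 0))
    have hzs : Function.Injective (fun i : Fin (k+1) => z i.succ) :=
      hz.comp (Fin.succ_injective _)
    have hzc : Function.Injective (fun i : Fin (k+1) => z i.castSucc) :=
      hz.comp (Fin.castSucc_injective _)
    have hd : z (Fin.last (k+1)) - z 0 ≠ 0 :=
      sub_ne_zero.mpr (hz.ne (by simp [Fin.ext_iff]))
    have key : ∀ w ∈ sphere c R, ∀ i : Fin (k+2), w - z i ≠ 0 := by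
      intro w hw i h
      have h1 : dist (z i) c < R := hb i
      have h2 : dist w c = R := hw
      rw [sub_eq_zero] at h
      rw [h] at h2
      exact absurd h2 (ne_of_lt h1)
    -- integrability
    have hint_s : CircleIntegrable (fun w => (∏ i : Fin (k+1), (w - z i.succ))⁻¹ * f w) c R := by
      refine ContinuousOn.circleIntegrable hR (ContinuousOn.mul (ContinuousOn.inv₀ ?_ ?_)
        hf.continuous.continuousOn)
      · exact (continuous_finset_prod _
          (fun i _ => continuous_id.sub continuous_const)).continuousOn
      · exact fun w hw => Finset.prod_ne_zero_iff.mpr (fun i _ => key w hw _)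
    have hint_c : CircleIntegrable
        (fun w => (∏ i : Fin (k+1), (w - z i.castSucc))⁻¹ * f w) c R := by
      refine ContinuousOn.circleIntegrable hR (ContinuousOn.mul (ContinuousOn.inv₀ ?_ ?_)
        hf.continuous.continuousOn)
      · exact (continuous_finset_prod _
          (fun i _ => continuous_id.sub continuous_const)).continuousOn
      · exact fun w hw => Finset.prod_ne_zero_iff.mpr (fun i _ => key w hw _)
    -- pointwise identity on the sphere
    have hpt : ∀ w ∈ sphere c R,
        ((∏ i : Fin (k+1), (w - z i.succ))⁻¹ * f w) -
          ((∏ i : Fin (k+1), (w - z i.castSucc))⁻¹ * f w)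
        = (z (Fin.last (k+1)) - z 0) • ((∏ i : Fin (k+2), (w - z i))⁻¹ * f w) := by
      intro w hw
      have hs : ∏ i : Fin (k+2), (w - z i) = (w - z 0) * ∏ i : Fin (k+1), (w - z i.succ) :=
        Fin.prod_univ_succ _
      have hc2 : ∏ i : Fin (k+2), (w - z i) =
          (∏ i : Fin (k+1), (w - z i.castSucc)) * (w - z (Fin.last (k+1))) :=
        Fin.prod_univ_castSucc _
      have ha : w - z 0 ≠ 0 := key w hw 0
      have hbne : w - z (Fin.last (k+1)) ≠ 0 := key w hw _
      have e1 : (∏ i : Fin (k+1), (w - z i.succ))⁻¹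
          = (w - z 0) * (∏ i : Fin (k+2), (w - z i))⁻¹ := by
        rw [hs, mul_inv, ← mul_assoc, mul_inv_cancel₀ ha, one_mul]
      have e2 : (∏ i : Fin (k+1), (w - z i.castSucc))⁻¹
          = (w - z (Fin.last (k+1))) * (∏ i : Fin (k+2), (w - z i))⁻¹ := by
        rw [hc2, mul_inv, mul_comm ((∏ i : Fin (k+1), (w - z i.castSucc))⁻¹),
          ← mul_assoc, mul_inv_cancel₀ hbne, one_mul]
      rw [e1, e2, smul_eq_mul]
      ring
    -- put everything together
    rw [show divDiff (k+1) f z =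
      (divDiff k f (fun i => z i.succ) - divDiff k f (fun i => z i.castSucc)) /
        (z (Fin.last (k+1)) - z 0) from rfl,
      IH c R _ hzs (fun i => hb i.succ), IH c R _ hzc (fun i => hb i.castSucc)]
    rw [← mul_sub, ← circleIntegral.integral_sub hint_s hint_c,
      circleIntegral.integral_congr hR hpt, circleIntegral.integral_smul, smul_eq_mul]
    rw [show (2 * ↑Real.pi * I)⁻¹ * ((z (Fin.last (k+1)) - z 0) *
        ∮ w in C(c, R), (∏ i : Fin (k+2), (w - z i))⁻¹ * f w)
      = (z (Fin.last (k+1)) - z 0) *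
        ((2 * ↑Real.pi * I)⁻¹ * ∮ w in C(c, R), (∏ i : Fin (k+2), (w - z i))⁻¹ * f w) by ring,
      mul_div_cancel_left₀ _ hd]

lemma divDiff_perm (f : ℂ → ℂ) (hf : Differentiable ℂ f) (k : ℕ)
    (z : Fin (k+1) → ℂ) (hz : Function.Injective z) (σ : Equiv.Perm (Fin (k+1))) :
    divDiff k f (z ∘ σ) = divDiff k f z := by
  set R : ℝ := 1 + ∑ i, ‖z i‖ with hR
  have hb : ∀ i, z i ∈ ball (0 : ℂ) R := by
    intro i
    have h1 : ‖z i‖ ≤ ∑ j, ‖z j‖ :=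
      Finset.single_le_sum (fun j _ => (norm_nonneg _)) (Finset.mem_univ i)
    simp only [mem_ball, dist_zero_right]
    linarith
  rw [divDiff_circleInt f hf k 0 R z hz hb,
    divDiff_circleInt f hf k 0 R (z ∘ σ) (hz.comp σ.injective) (fun i => hb (σ i))]
  congr 2
  funext w
  congr 2
  exact Equiv.prod_comp σ (fun i => w - z i)

lemma close_bound (p : ℂ → ℝ) (hp0 : ∀ z, 0 ≤ p z) (D E : ℝ) (hD : 0 < D) (hE : 0 < E)
    (hDE : ∀ z w : ℂ, ‖z - w‖ ≤ 1 → p z ≤ D * p w + E)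
    (f : ℂ → ℂ) (hdf : Differentiable ℂ f) (A B : ℝ) (hA : 0 < A) (hB : 0 < B)
    (hbd : ∀ z, ‖f z‖ ≤ A * Real.exp (B * p z))
    (k : ℕ) (z : Fin (k+1) → ℂ) (hz : Function.Injective z)
    (hcl : ∀ i, ‖z i - z 0‖ < 1) :
    ‖divDiff k f z‖ ≤
      (2 * A * Real.exp (B * (D * E + E))) * Real.exp ((B * D * D) * ∑ i, p (z i)) := by
  have hb : ∀ i, z i ∈ ball (z 0) 2 := by
    intro i
    have := hcl i
    simp only [mem_ball, dist_eq_norm]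
    linarith
  set M : ℝ := A * Real.exp (B * (D * (D * p (z 0) + E) + E)) with hM
  have hMpos : 0 < M := mul_pos hA (Real.exp_pos _)
  -- pointwise bound on the sphere
  have hpt : ∀ w ∈ sphere (z 0) 2, ‖(∏ i, (w - z i))⁻¹ * f w‖ ≤ M := by
    intro w hw
    have hw2 : ‖w - z 0‖ = 2 := by
      simpa [dist_eq_norm] using hw
    have hfac : ∀ i, 1 ≤ ‖w - z i‖ := by
      intro i
      have h1 := hcl i
      have : ‖w - z 0‖ ≤ ‖w - z i‖ + ‖z i - z 0‖ := by
        simpa using norm_add_le (w - z i) (z i - z 0)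
      linarith
    have hprod : 1 ≤ ‖∏ i, (w - z i)‖ := by
      rw [norm_prod]
      calc (1:ℝ) = ∏ _i : Fin (k+1), 1 := by simp
      _ ≤ ∏ i, ‖w - z i‖ :=
        Finset.prod_le_prod (fun i _ => zero_le_one) (fun i _ => hfac i)
    have hfw : ‖f w‖ ≤ M := by
      set m : ℂ := z 0 + (w - z 0) / 2 with hm
      have h1 : ‖w - m‖ ≤ 1 := by
        have : w - m = (w - z 0) / 2 := by ring
        rw [this, norm_div, hw2]
        norm_num
      have h2 : ‖m - z 0‖ ≤ 1 := by
        have : m - z 0 = (w - z 0) / 2 := by ring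
        rw [this, norm_div, hw2]
        norm_num
      have hpw : p w ≤ D * (D * p (z 0) + E) + E := by
        calc p w ≤ D * p m + E := hDE w m h1
        _ ≤ D * (D * p (z 0) + E) + E := by
            have := hDE m (z 0) h2
            nlinarith
      calc ‖f w‖ ≤ A * Real.exp (B * p w) := hbd w
      _ ≤ M := by
          rw [hM]
          exact mul_le_mul_of_nonneg_left (Real.exp_le_exp.mpr (by nlinarith)) hA.le
    rw [norm_mul, norm_inv]
    calc (‖∏ i, (w - z i)‖)⁻¹ * ‖f w‖
        ≤ 1 * M := by
          refine mul_le_mul ?_ hfw (norm_nonneg _) zero_le_one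
          exact inv_le_one_of_one_le₀ hprod
    _ = M := one_mul M
  have hnorm : ‖∮ w in C(z 0, 2), (∏ i, (w - z i))⁻¹ * f w‖ ≤ 2 * Real.pi * 2 * M :=
    circleIntegral.norm_integral_le_of_norm_le_const (by norm_num) hpt
  rw [divDiff_circleInt f hdf k (z 0) 2 z hz hb]
  have habs : ‖(2 * Real.pi * I : ℂ)⁻¹‖ = (2 * Real.pi)⁻¹ := by
    rw [norm_inv]
    simp [abs_of_pos Real.pi_pos]
  have hM2 : M ≤ (A * Real.exp (B * (D * E + E))) * Real.exp ((B * D * D) * ∑ i, p (z i)) := by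
    rw [hM, mul_assoc, ← Real.exp_add]
    refine mul_le_mul_of_nonneg_left (Real.exp_le_exp.mpr ?_) hA.le
    have hsum : p (z 0) ≤ ∑ i, p (z i) :=
      Finset.single_le_sum (fun i _ => hp0 (z i)) (Finset.mem_univ 0)
    nlinarith [mul_le_mul_of_nonneg_left hsum (by positivity : (0:ℝ) ≤ B * D * D)]
  calc ‖(2 * Real.pi * I : ℂ)⁻¹ * ∮ w in C(z 0, 2), (∏ i, (w - z i))⁻¹ * f w‖
      = (2 * Real.pi)⁻¹ * ‖∮ w in C(z 0, 2), (∏ i, (w - z i))⁻¹ * f w‖ := by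
        rw [norm_mul, habs]
  _ ≤ (2 * Real.pi)⁻¹ * (2 * Real.pi * 2 * M) := by
        refine mul_le_mul_of_nonneg_left hnorm (by positivity)
  _ = 2 * M := by
        field_simp
  _ ≤ 2 * ((A * Real.exp (B * (D * E + E))) * Real.exp ((B * D * D) * ∑ i, p (z i))) := by
        linarith
  _ = (2 * A * Real.exp (B * (D * E + E))) * Real.exp ((B * D * D) * ∑ i, p (z i)) := by ring

lemma main_bound (p : ℂ → ℝ) (hp0 : ∀ z, 0 ≤ p z) (D E : ℝ) (hD : 0 < D) (hE : 0 < E)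
    (hDE : ∀ z w : ℂ, ‖z - w‖ ≤ 1 → p z ≤ D * p w + E)
    (f : ℂ → ℂ) (hdf : Differentiable ℂ f) (A B : ℝ) (hA : 0 < A) (hB : 0 < B)
    (hbd : ∀ z, ‖f z‖ ≤ A * Real.exp (B * p z)) :
    ∀ k : ℕ, ∃ A' > 0, ∃ B' > 0, ∀ z : Fin (k+1) → ℂ, Function.Injective z →
      ‖divDiff k f z‖ ≤ A' * Real.exp (B' * ∑ i, p (z i)) := by
  intro k
  induction k with
  | zero =>
    refine ⟨A, hA, B, hB, fun z _ => ?_⟩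
    rw [show divDiff 0 f z = f (z 0) from rfl, Fin.sum_univ_one]
    exact hbd (z 0)
  | succ k IH =>
    obtain ⟨A₁, hA₁, B₁, hB₁, hIH⟩ := IH
    set Ac : ℝ := 2 * A * Real.exp (B * (D * E + E)) with hAc
    set Bc : ℝ := B * D * D with hBc
    have hAcpos : 0 < Ac := by positivity
    have hBcpos : 0 < Bc := by positivity
    refine ⟨Ac + 2 * A₁, by positivity, max Bc B₁, lt_max_of_lt_left hBcpos, fun z hz => ?_⟩
    have hsum_nonneg : 0 ≤ ∑ i, p (z i) := Finset.sum_nonneg (fun i _ => hp0 (z i))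
    by_cases hclose : ∀ i, ‖z i - z 0‖ < 1
    · -- close case
      have h := close_bound p hp0 D E hD hE hDE f hdf A B hA hB hbd (k+1) z hz hclose
      calc ‖divDiff (k+1) f z‖ ≤ Ac * Real.exp (Bc * ∑ i, p (z i)) := h
      _ ≤ (Ac + 2 * A₁) * Real.exp (max Bc B₁ * ∑ i, p (z i)) := by
          refine mul_le_mul (by linarith) (Real.exp_le_exp.mpr ?_) (Real.exp_pos _).le
            (by positivity)
          exact mul_le_mul_of_nonneg_right (le_max_left _ _) hsum_nonneg
    · -- far case : some pair at distance ≥ 1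
      push_neg at hclose
      obtain ⟨a, ha⟩ := hclose
      have hab : (1:ℝ) ≤ ‖z a - z 0‖ := ha
      have hne : a ≠ 0 := by
        intro h; rw [h, sub_self] at hab; simp at hab; linarith
      have hlast0 : (0 : Fin (k+2)) ≠ Fin.last (k+1) := by simp [Fin.ext_iff]
      set σ : Equiv.Perm (Fin (k+2)) := Equiv.swap (Fin.last (k+1)) a with hσ
      have hσ0 : σ 0 = 0 := Equiv.swap_apply_of_ne_of_ne hlast0 (Ne.symm hne)
      have hσl : σ (Fin.last (k+1)) = a := Equiv.swap_apply_left _ _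
      set y : Fin (k+2) → ℂ := z ∘ σ with hy
      have hyinj : Function.Injective y := hz.comp σ.injective
      have hrw : divDiff (k+1) f z = divDiff (k+1) f y :=
        (divDiff_perm f hdf (k+1) z hz σ).symm
      have hyd : divDiff (k+1) f y =
          (divDiff k f (fun i => y i.succ) - divDiff k f (fun i => y i.castSucc)) /
            (y (Fin.last (k+1)) - y 0) := rfl
      have hsum_eq : ∑ j, p (y j) = ∑ j, p (z j) := Equiv.sum_comp σ (fun j => p (z j))
      have hsum_s : ∑ i : Fin (k+1), p (y i.succ) ≤ ∑ j, p (z j) := by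
        have hs := Fin.sum_univ_succ (fun j => p (y j))
        rw [← hsum_eq]
        have := hp0 (y 0)
        linarith
      have hsum_c : ∑ i : Fin (k+1), p (y i.castSucc) ≤ ∑ j, p (z j) := by
        have hs := Fin.sum_univ_castSucc (fun j => p (y j))
        rw [← hsum_eq]
        have := hp0 (y (Fin.last (k+1)))
        linarith
      have hbnd : ∀ g : Fin (k+1) → ℂ, Function.Injective g →
          (∑ i, p (g i) ≤ ∑ j, p (z j)) →
          ‖divDiff k f g‖ ≤ A₁ * Real.exp (B₁ * ∑ j, p (z j)) := by
        intro g hg hsle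
        calc ‖divDiff k f g‖ ≤ A₁ * Real.exp (B₁ * ∑ i, p (g i)) := hIH g hg
        _ ≤ A₁ * Real.exp (B₁ * ∑ j, p (z j)) := by
            exact mul_le_mul_of_nonneg_left
              (Real.exp_le_exp.mpr (mul_le_mul_of_nonneg_left hsle hB₁.le)) hA₁.le
      have h1 : ‖divDiff k f (fun i => y i.succ)‖ ≤
          A₁ * Real.exp (B₁ * ∑ j, p (z j)) :=
        hbnd _ (hyinj.comp (Fin.succ_injective _)) hsum_s
      have h2 : ‖divDiff k f (fun i => y i.castSucc)‖ ≤
          A₁ * Real.exp (B₁ * ∑ j, p (z j)) :=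
        hbnd _ (hyinj.comp (Fin.castSucc_injective _)) hsum_c
      have hden : (1:ℝ) ≤ ‖y (Fin.last (k+1)) - y 0‖ := by
        rw [hy]; simp only [Function.comp_apply, hσ0, hσl]; exact hab
      rw [hrw, hyd, norm_div]
      have hnum : ‖divDiff k f (fun i => y i.succ) -
          divDiff k f (fun i => y i.castSucc)‖ ≤ 2 * A₁ * Real.exp (B₁ * ∑ j, p (z j)) := by
        calc ‖divDiff k f (fun i => y i.succ) - divDiff k f (fun i => y i.castSucc)‖
            ≤ ‖divDiff k f (fun i => y i.succ)‖ +
              ‖divDiff k f (fun i => y i.castSucc)‖ :=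
              by simpa using
                norm_sub_le (divDiff k f (fun i => y i.succ))
                  (divDiff k f (fun i => y i.castSucc))
        _ ≤ 2 * A₁ * Real.exp (B₁ * ∑ j, p (z j)) := by linarith
      calc ‖divDiff k f (fun i => y i.succ) -
            divDiff k f (fun i => y i.castSucc)‖ / ‖y (Fin.last (k+1)) - y 0‖
          ≤ ‖divDiff k f (fun i => y i.succ) -
            divDiff k f (fun i => y i.castSucc)‖ / 1 :=
            div_le_div_of_nonneg_left (norm_nonneg _) one_pos hden
      _ ≤ 2 * A₁ * Real.exp (B₁ * ∑ j, p (z j)) := by rw [div_one]; exact hnum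
      _ ≤ (Ac + 2 * A₁) * Real.exp (max Bc B₁ * ∑ j, p (z j)) := by
          refine mul_le_mul (by linarith) (Real.exp_le_exp.mpr ?_) (Real.exp_pos _).le
            (by positivity)
          exact mul_le_mul_of_nonneg_right (le_max_right _ _) hsum_nonneg

theorem stmt2 (p : ℂ → ℝ) (hp : IsWeight p) (Λ : Set ℂ) (hΛd : DiscreteSet Λ)
    (f : ℂ → ℂ) (hf : MemAp p f) : ∀ k : ℕ, MemX p Λ k f := by
  intro k
  obtain ⟨hp0, -, D, hD, E, hE, hDE⟩ := hp
  obtain ⟨hdf, A, hA, B, hB, hbd⟩ := hf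
  obtain ⟨A', hA', B', hB', h⟩ :=
    main_bound p hp0 D E hD hE hDE f hdf A B hA hB hbd k
  exact ⟨A', hA', B', hB', fun z _ hinj => h z hinj⟩
end

section
/- If Λ ⊂ ℂ is weakly separated with respect to the weight p, then X⁰_p(Λ) = X^n_p(Λ) for every n ∈ ℕ; i.e., every function on Λ with values bounded by A e^{Bp(λ)} has all its divided differences of every order uniformly bounded with respect to p. -/
open Complex Metric Set

/-- Auxiliary tuple: `l` followed by `μ 0, …, μ (m-1)`. -/
noncomputable def Ttup (μ : ℕ → ℂ) (m : ℕ) (l : ℂ) : Fin (m+1) → ℂ :=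
  fun i => if (i : ℕ) = 0 then l else μ ((i : ℕ) - 1)

lemma Ttup_rec (μ : ℕ → ℂ) (ω : ℂ → ℂ) (m : ℕ) (l : ℂ) (h : μ m ≠ l) :
    divDiff m ω (Ttup μ m l) =
      divDiff m ω (fun i : Fin (m+1) => μ (i : ℕ)) -
        (μ m - l) * divDiff (m+1) ω (Ttup μ (m+1) l) := by
  have h1 : (fun i : Fin (m+1) => Ttup μ (m+1) l i.succ) =
      fun i : Fin (m+1) => μ (i : ℕ) := by
    funext i; simp [Ttup, Fin.val_succ]
  have h2 : (fun i : Fin (m+1) => Ttup μ (m+1) l i.castSucc) = Ttup μ m l := by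
    funext i; simp [Ttup]
  have h3 : Ttup μ (m+1) l (Fin.last (m+1)) = μ m := by
    simp [Ttup, Fin.last]
  have h4 : Ttup μ (m+1) l 0 = l := by simp [Ttup]
  conv_rhs => rw [divDiff]
  rw [h1, h2, h3, h4]
  rw [mul_div_cancel₀ _ (sub_ne_zero.mpr h)]
  ring

lemma Ttup_inj (μ : ℕ → ℂ) (hμ : Function.Injective μ) (m : ℕ) (l : ℂ)
    (hl : ∀ i < m, μ i ≠ l) : Function.Injective (Ttup μ m l) := by
  intro i j hij
  simp only [Ttup] at hij
  by_cases hi : (i : ℕ) = 0 <;> by_cases hj : (j : ℕ) = 0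
  · exact Fin.ext (by omega)
  · rw [if_pos hi, if_neg hj] at hij
    exact absurd hij.symm (hl _ (by omega; ) )
  · rw [if_neg hi, if_pos hj] at hij
    exact absurd hij (hl _ (by omega))
  · rw [if_neg hi, if_neg hj] at hij
    have := hμ hij
    have hi' := i.isLt; have hj' := j.isLt
    exact Fin.ext (by omega)

theorem stmt3 (p : ℂ → ℝ) (hp : IsWeight p) (Λ : Set ℂ) (hΛ : Λ.Infinite)
    (hw : WeaklySeparated p Λ) :
    ∀ (n : ℕ) (ω : ℂ → ℂ), MemX p Λ 0 ω ↔ MemX p Λ n ω := by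
  obtain ⟨hp0, ⟨K, hK, hKp⟩, -⟩ := hp
  obtain ⟨ε, hε, C, hC, hsep⟩ := hw
  -- growth bound: |z| ≤ exp (p z / (2K))
  have growth : ∀ z : ℂ, ‖z‖ ≤ Real.exp (p z / (2 * K)) := by
    intro z
    have h1 : Real.log (1 + ‖z‖ ^ 2) ≤ p z / K := by
      rw [le_div_iff₀ hK]
      linarith [hKp z, mul_comm K (Real.log (1 + ‖z‖ ^ 2))]
    have h2 : (1 : ℝ) + ‖z‖ ^ 2 ≤ Real.exp (p z / K) := by
      have hpos : (0 : ℝ) < 1 + ‖z‖ ^ 2 := by positivity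
      calc (1 : ℝ) + ‖z‖ ^ 2 = Real.exp (Real.log (1 + ‖z‖ ^ 2)) :=
            (Real.exp_log hpos).symm
        _ ≤ Real.exp (p z / K) := Real.exp_le_exp.mpr h1
    have h3 : ‖z‖ ^ 2 ≤ Real.exp (p z / (2 * K)) ^ 2 := by
      have : Real.exp (p z / (2 * K)) ^ 2 = Real.exp (p z / K) := by
        rw [← Real.exp_nat_mul]
        congr 1
        field_simp
        ring
      rw [this]
      linarith
    have := abs_le_abs (a := ‖z‖) (b := Real.exp (p z / (2 * K)))
    nlinarith [norm_nonneg z, Real.exp_pos (p z / (2 * K))]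
  -- separation bound
  have sep : ∀ l ∈ Λ, ∀ m ∈ Λ, l ≠ m →
      ε * Real.exp (-C * p l) ≤ ‖l - m‖ := by
    intro l hl m hm hlm
    by_contra hcon
    push_neg at hcon
    have hm1 : m ∈ ball l (ε * Real.exp (-C * p l)) := by
      rw [mem_ball, Complex.dist_eq, ← norm_neg]
      simpa [neg_sub] using hcon
    have hm2 : m ∈ ball m (ε * Real.exp (-C * p m)) := by
      rw [mem_ball, dist_self]
      positivity
    exact (hsep l hl m hm hlm).ne_of_mem hm1 hm2 rfl
  -- forward: MemX 0 → MemX n, via the inductive step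
  have step : ∀ (n : ℕ) (ω : ℂ → ℂ), MemX p Λ n ω → MemX p Λ (n+1) ω := by
    rintro n ω ⟨A, hA, B, hB, H⟩
    refine ⟨2 * A / ε, by positivity, B + C, by positivity, ?_⟩
    intro z hz hzinj
    set S := ∑ i, p (z i) with hS
    have hS0 : 0 ≤ S := Finset.sum_nonneg fun i _ => hp0 _
    have hlast0 : (Fin.last (n+1) : Fin (n+2)) ≠ 0 := by
      simp [Fin.ext_iff]
    have hne : z (Fin.last (n+1)) ≠ z 0 := fun h => hlast0 (hzinj h)
    have hzt : ‖divDiff n ω (fun i => z i.succ)‖ ≤ A * Real.exp (B * S) := by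
      have := H (fun i => z i.succ) (fun i => hz _) (hzinj.comp (Fin.succ_injective _))
      refine this.trans (mul_le_mul_of_nonneg_left (Real.exp_le_exp.mpr
        (mul_le_mul_of_nonneg_left ?_ hB.le)) hA.le)
      rw [hS]
      conv_rhs => rw [Fin.sum_univ_succ]
      exact le_add_of_nonneg_left (hp0 _)
    have hzc : ‖divDiff n ω (fun i => z i.castSucc)‖ ≤ A * Real.exp (B * S) := by
      have := H (fun i => z i.castSucc) (fun i => hz _)
        (hzinj.comp (Fin.castSucc_injective _))
      refine this.trans (mul_le_mul_of_nonneg_left (Real.exp_le_exp.mpr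
        (mul_le_mul_of_nonneg_left ?_ hB.le)) hA.le)
      rw [hS]
      conv_rhs => rw [Fin.sum_univ_castSucc]
      exact le_add_of_nonneg_right (hp0 _)
    have hden : ε * Real.exp (-C * S) ≤ ‖z (Fin.last (n+1)) - z 0‖ := by
      refine le_trans ?_ (sep _ (hz _) _ (hz _) hne)
      have hple : p (z (Fin.last (n+1))) ≤ S :=
        Finset.single_le_sum (f := fun i => p (z i)) (fun i _ => hp0 _) (Finset.mem_univ _)
      exact mul_le_mul_of_nonneg_left (Real.exp_le_exp.mpr (by nlinarith)) hε.le
    have hdenpos : 0 < ‖z (Fin.last (n+1)) - z 0‖ := by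
      have : (0:ℝ) < ε * Real.exp (-C * S) := by positivity
      linarith
    rw [show divDiff (n+1) ω z = (divDiff n ω (fun i => z i.succ) -
        divDiff n ω (fun i => z i.castSucc)) / (z (Fin.last (n+1)) - z 0) from rfl]
    rw [norm_div]
    have hnum : ‖divDiff n ω (fun i => z i.succ) -
        divDiff n ω (fun i => z i.castSucc)‖ ≤ 2 * A * Real.exp (B * S) := by
      calc _ ≤ ‖divDiff n ω (fun i => z i.succ)‖ +
          ‖divDiff n ω (fun i => z i.castSucc)‖ := by
            exact norm_sub_le _ _
        _ ≤ 2 * A * Real.exp (B * S) := by linarith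
    calc ‖divDiff n ω (fun i => z i.succ) -
          divDiff n ω (fun i => z i.castSucc)‖ / ‖z (Fin.last (n+1)) - z 0‖
        ≤ (2 * A * Real.exp (B * S)) / (ε * Real.exp (-C * S)) := by
          apply div_le_div₀ (by positivity) hnum (by positivity) hden
      _ = 2 * A / ε * Real.exp ((B + C) * S) := by
          have hexp : Real.exp ((B + C) * S) = Real.exp (B * S) * Real.exp (C * S) := by
            rw [← Real.exp_add]; ring_nf
          rw [hexp, neg_mul, Real.exp_neg]
          field_simp
  -- reverse: MemX n → MemX 0
  have rev : ∀ (n : ℕ) (ω : ℂ → ℂ), MemX p Λ n ω → MemX p Λ 0 ω := by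
    rintro n ω ⟨A, hA, B, hB, H⟩
    have e := hΛ.natEmbedding
    set μ : ℕ → ℂ := fun i => (e i : ℂ) with hμ
    have hμΛ : ∀ i, μ i ∈ Λ := fun i => (e i).2
    have hμinj : Function.Injective μ := fun i j h => e.injective (Subtype.ext h)
    have claim : ∀ k m, m + k = n → ∃ A' > 0, ∃ B' > 0, ∀ l ∈ Λ, (∀ i < n, μ i ≠ l) →
        ‖divDiff m ω (Ttup μ m l)‖ ≤ A' * Real.exp (B' * p l) := by
      intro k
      induction k with
      | zero =>
        intro m hm
        have hmn : m = n := by omega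
        subst hmn
        refine ⟨A * Real.exp (B * ∑ i : Fin m, p (μ (i : ℕ))), by positivity, B, hB, ?_⟩
        intro l hl hlne
        have hmem : ∀ i, Ttup μ m l i ∈ Λ := by
          intro i
          by_cases h : (i : ℕ) = 0 <;> simp [Ttup, h, hl, hμΛ]
        have hinj : Function.Injective (Ttup μ m l) :=
          Ttup_inj μ hμinj m l (fun i hi => hlne i hi)
        have := H (Ttup μ m l) hmem hinj
        refine this.trans_eq ?_
        have hsum : ∑ i, p (Ttup μ m l i) = p l + ∑ i : Fin m, p (μ (i : ℕ)) := by
          have e0 : Ttup μ m l 0 = l := by simp [Ttup]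
          have es : ∀ i : Fin m, Ttup μ m l i.succ = μ (i : ℕ) := by
            intro i; simp [Ttup, Fin.val_succ]
          rw [Fin.sum_univ_succ, e0]
          simp only [es]
        rw [hsum, mul_add, Real.exp_add]
        ring
      | succ k ih =>
        intro m hm
        obtain ⟨A', hA', B', hB', IH⟩ := ih (m+1) (by omega)
        set Cm := ‖divDiff m ω (fun i : Fin (m+1) => μ (i : ℕ))‖ with hCm
        have hCm0 : 0 ≤ Cm := norm_nonneg _
        refine ⟨Cm + (‖μ m‖ + 1) * A', by positivity,
          B' + 1 / (2 * K), by positivity, ?_⟩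
        intro l hl hlne
        have hne : μ m ≠ l := hlne m (by omega)
        rw [Ttup_rec μ ω m l hne]
        have hIH := IH l hl hlne
        have hpl : 0 ≤ p l := hp0 l
        have hE1 : (1:ℝ) ≤ Real.exp (p l / (2 * K)) :=
          Real.one_le_exp (div_nonneg hpl (by positivity))
        have hx1 : (1:ℝ) ≤ Real.exp (B' * p l) :=
          Real.one_le_exp (mul_nonneg hB'.le hpl)
        have habsl : ‖l‖ ≤ Real.exp (p l / (2 * K)) := growth l
        calc ‖divDiff m ω (fun i : Fin (m+1) => μ (i : ℕ)) -
              (μ m - l) * divDiff (m+1) ω (Ttup μ (m+1) l)‖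
            ≤ Cm + ‖μ m - l‖ *
              ‖divDiff (m+1) ω (Ttup μ (m+1) l)‖ := by
              rw [← norm_mul]
              exact norm_sub_le _ _
          _ ≤ Cm + (‖μ m‖ + Real.exp (p l / (2 * K))) *
              (A' * Real.exp (B' * p l)) := by
              gcongr
              all_goals first
                | exact hIH
                | exact (norm_sub_le _ _).trans (by gcongr)
          _ ≤ (Cm + (‖μ m‖ + 1) * A') *
              Real.exp ((B' + 1 / (2 * K)) * p l) := by
              rw [show (B' + 1 / (2 * K)) * p l = B' * p l + p l / (2 * K) by ring,
                Real.exp_add]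
              have h0 : 0 ≤ ‖μ m‖ := norm_nonneg _
              have hxy : (1:ℝ) ≤ Real.exp (B' * p l) * Real.exp (p l / (2 * K)) := by
                nlinarith
              have f1 : 0 ≤ Cm * (Real.exp (B' * p l) * Real.exp (p l / (2 * K)) - 1) :=
                mul_nonneg hCm0 (by linarith)
              have f2 : 0 ≤ ‖μ m‖ * A' * Real.exp (B' * p l) *
                  (Real.exp (p l / (2 * K)) - 1) :=
                mul_nonneg (by positivity) (by linarith)
              nlinarith [f1, f2]
    obtain ⟨A', hA', B', hB', H0⟩ := claim n 0 (by omega)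
    have hsum0' : 0 ≤ ∑ i ∈ Finset.range n, ‖ω (μ i)‖ :=
      Finset.sum_nonneg fun i _ => norm_nonneg _
    refine ⟨A' + ∑ i ∈ Finset.range n, ‖ω (μ i)‖, by linarith, B', hB', ?_⟩
    intro z hz hzinj
    have hz0 : z 0 ∈ Λ := hz 0
    have hdd : divDiff 0 ω z = ω (z 0) := rfl
    rw [hdd, Fin.sum_univ_one]
    have hsum0 : 0 ≤ ∑ i ∈ Finset.range n, ‖ω (μ i)‖ :=
      Finset.sum_nonneg fun i _ => norm_nonneg _
    have hx1 : (1:ℝ) ≤ Real.exp (B' * p (z 0)) :=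
      Real.one_le_exp (mul_nonneg hB'.le (hp0 _))
    by_cases hcase : ∀ i < n, μ i ≠ z 0
    · have := H0 (z 0) hz0 hcase
      have hdd0 : divDiff 0 ω (Ttup μ 0 (z 0)) = ω (z 0) := by
        simp [divDiff, Ttup]
      rw [hdd0] at this
      refine this.trans ?_
      gcongr
      linarith
    · push_neg at hcase
      obtain ⟨i, hi, hieq⟩ := hcase
      have : ‖ω (z 0)‖ ≤ ∑ j ∈ Finset.range n, ‖ω (μ j)‖ := by
        rw [← hieq]
        exact Finset.single_le_sum (f := fun j => ‖ω (μ j)‖)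
          (fun j _ => norm_nonneg _) (Finset.mem_range.mpr hi)
      calc ‖ω (z 0)‖ ≤ ∑ j ∈ Finset.range n, ‖ω (μ j)‖ := this
        _ ≤ (A' + ∑ i ∈ Finset.range n, ‖ω (μ i)‖) * Real.exp (B' * p (z 0)) := by
            nlinarith
  intro n ω
  constructor
  · intro h
    induction n with
    | zero => exact h
    | succ n ih => exact step n ω ih
  · exact rev n ω
end

section
/- If there exist constants ε>0 and C>0 such that every disk D(λ, ε e^{−Cp(λ)}), λ ∈ Λ, contains at most n points of Λ, then Λ can be written as the union of n weakly separated sequences. -/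
open Complex Metric Set

lemma exists_coloring {V : Type*} (n : ℕ) (hn : 0 < n) (R : V → V → Prop)
    (hsym : ∀ v w, R v w → R w v) (f : V → ℕ) (hf : Function.Injective f)
    (hdeg : ∀ v, ({w | w ≠ v ∧ R v w}).encard < n) :
    ∃ c : V → Fin n, ∀ v w, v ≠ w → R v w → c v ≠ c w := by
  have key : ∀ (v : V) (ih : ∀ w, f w < f v → Fin n), ∃ c : Fin n,
      ∀ w (hw : f w < f v), w ≠ v → R v w → ih w hw ≠ c := by
    intro v ih
    have hfin : ({w | w ≠ v ∧ R v w}).Finite := by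
      rw [← Set.encard_lt_top_iff]
      exact (hdeg v).trans_le le_top
    set g : V → Fin n := fun w => if hw : f w < f v then ih w hw else ⟨0, hn⟩ with hg
    have hcard : (hfin.toFinset.image g).card < n := by
      refine lt_of_le_of_lt Finset.card_image_le ?_
      have h2 := hdeg v
      rw [hfin.encard_eq_coe_toFinset_card] at h2
      exact_mod_cast h2
    have hpos : 0 < (hfin.toFinset.image g)ᶜ.card := by
      rw [Finset.card_compl, Fintype.card_fin]; omega
    obtain ⟨c, hc⟩ := Finset.card_pos.mp hpos
    rw [Finset.mem_compl] at hc
    refine ⟨c, fun w hw hwv hR hEq => hc ?_⟩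
    have : ih w hw = g w := by simp [hg, hw]
    rw [Finset.mem_image]
    exact ⟨w, by simpa [hfin.mem_toFinset] using ⟨hwv, hR⟩, by rw [← this, hEq]⟩
  let F : ∀ v : V, (∀ w, InvImage Nat.lt f w v → Fin n) → Fin n :=
    fun v ih => Classical.choose (key v ih)
  have hwf : WellFounded (InvImage Nat.lt f) := InvImage.wf f Nat.lt_wfRel.wf
  set c : V → Fin n := hwf.fix F with hcdef
  have hfix : ∀ v, c v = F v (fun w _ => c w) := fun v => hwf.fix_eq F v
  refine ⟨c, fun v w hvw hR => ?_⟩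
  have hfv : f v ≠ f w := fun e => hvw (hf e)
  rcases Nat.lt_or_ge (f w) (f v) with hlt | hge
  · have spec := Classical.choose_spec (key v (fun u _ => c u))
    intro hEq
    exact spec w hlt (Ne.symm hvw) hR (hEq.symm.trans (hfix v))
  · have hlt : f v < f w := lt_of_le_of_ne hge hfv
    have spec := Classical.choose_spec (key w (fun u _ => c u))
    intro hEq
    exact spec v hlt hvw (hsym v w hR) (hEq.trans (hfix w))

lemma countable_of_discreteSet{Λ : Set ℂ} (hΛd : DiscreteSet Λ) : Λ.Countable := by
  have hU : Λ = ⋃ k : ℕ, Λ ∩ closedBall 0 k := by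
    ext z
    simp only [mem_iUnion, mem_inter_iff, mem_closedBall]
    constructor
    · intro hz
      obtain ⟨k, hk⟩ := exists_nat_ge (dist z (0:ℂ))
      exact ⟨k, hz, hk⟩
    · rintro ⟨k, hk, -⟩; exact hk
  rw [hU]
  refine countable_iUnion fun k => Set.Finite.countable ?_
  by_contra hinf
  rw [← Set.not_infinite, not_not] at hinf
  obtain ⟨x, -, hx⟩ := hinf.exists_accPt_of_subset_isCompact
    (isCompact_closedBall (0:ℂ) k) inter_subset_right
  exact hΛd x (hx.mono (Filter.principal_mono.mpr inter_subset_left))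

theorem stmt5 (p : ℂ → ℝ) (hp : IsWeight p) (Λ : Set ℂ) (hΛd : DiscreteSet Λ)
    (n : ℕ) (hn : 1 ≤ n)
    (h : ∃ ε > 0, ∃ C > 0, ∀ l ∈ Λ,
      (Λ ∩ ball l (ε * Real.exp (-C * p l))).encard ≤ n) :
    ∃ Λs : Fin n → Set ℂ, Λ = ⋃ j, Λs j ∧ ∀ j, WeaklySeparated p (Λs j) := by
  obtain ⟨hp0, -, D₀, hD₀, E, hE, hDE₀⟩ := hp
  obtain ⟨ε, hε, C, hC, hball⟩ := h
  set D : ℝ := max D₀ 1 with hDdef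
  have hD1 : 1 ≤ D := le_max_right _ _
  have hDE : ∀ z w : ℂ, ‖z - w‖ ≤ 1 → p z ≤ D * p w + E := by
    intro z w hzw
    refine (hDE₀ z w hzw).trans ?_
    have := hp0 w
    nlinarith [le_max_left D₀ (1:ℝ)]
  set ε₁ : ℝ := min 1 (ε * Real.exp (-(C * E))) with hε₁def
  have hε₁ : 0 < ε₁ := lt_min one_pos (by positivity)
  set C₁ : ℝ := C * D with hC₁def
  have hC₁ : 0 < C₁ := by nlinarith
  have hCC₁ : C ≤ C₁ := by nlinarith
  set r : ℂ → ℝ := fun l => ε₁ * Real.exp (-C₁ * p l) with hrdef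
  have hr_pos : ∀ l, 0 < r l := fun l => by positivity
  have hr_le1 : ∀ l, r l ≤ 1 := by
    intro l
    calc r l ≤ ε₁ * 1 := by
          refine mul_le_mul_of_nonneg_left ?_ hε₁.le
          rw [Real.exp_le_one_iff]
          have := hp0 l; nlinarith
      _ ≤ 1 := by rw [mul_one]; exact min_le_left _ _
  -- key inclusion
  have hkey : ∀ l m : ℂ, (dist m l < r l ∨ dist m l < r m) →
      m ∈ ball l (ε * Real.exp (-C * p l)) := by
    intro l m hm
    rw [mem_ball]
    rcases hm with hm | hm
    · refine hm.trans_le ?_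
      have h1 : ε₁ ≤ ε := le_trans (min_le_right _ _)
        (by nlinarith [Real.exp_le_one_iff.mpr (by nlinarith : -(C * E) ≤ 0), Real.exp_pos (-(C*E))])
      have h2 : Real.exp (-C₁ * p l) ≤ Real.exp (-C * p l) := by
        rw [Real.exp_le_exp]
        have := hp0 l; nlinarith
      exact mul_le_mul h1 h2 (Real.exp_pos _).le hε.le
    · have hdist1 : ‖l - m‖ ≤ 1 := by
        rw [← Complex.dist_eq, dist_comm]
        exact le_trans hm.le (hr_le1 m)
      have hpl : p l ≤ D * p m + E := hDE l m hdist1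
      refine hm.trans_le ?_
      have : r m ≤ ε * Real.exp (-(C * E)) * Real.exp (-C₁ * p m) :=
        mul_le_mul_of_nonneg_right (min_le_right _ _) (Real.exp_pos _).le
      refine this.trans ?_
      rw [mul_assoc, ← Real.exp_add]
      refine mul_le_mul_of_nonneg_left ?_ hε.le
      rw [Real.exp_le_exp]
      have hpm := hp0 m
      nlinarith
  -- the relation on the subtype
  set R : Λ → Λ → Prop := fun v w => dist (w : ℂ) (v : ℂ) < r v ∨ dist (w : ℂ) (v : ℂ) < r w
    with hRdef
  have hsym : ∀ v w, R v w → R w v := by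
    intro v w hvw
    simp only [hRdef] at *
    rw [dist_comm]
    tauto
  obtain ⟨f, hf⟩ := Set.countable_iff_exists_injective.mp (countable_of_discreteSet hΛd)
  have hdeg : ∀ v : Λ, ({w : Λ | w ≠ v ∧ R v w}).encard < n := by
    intro v
    set S := Λ ∩ ball (v : ℂ) (ε * Real.exp (-C * p (v : ℂ))) with hSdef
    have hvS : (v : ℂ) ∈ S := ⟨v.2, by rw [mem_ball, dist_self]; positivity⟩
    have hSfin : S.Finite := by
      rw [← Set.encard_lt_top_iff]
      exact lt_of_le_of_lt (hball v v.2) (WithTop.coe_lt_top n)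
    have himg : (fun w : Λ => (w : ℂ)) '' {w : Λ | w ≠ v ∧ R v w} ⊆ S \ {(v : ℂ)} := by
      rintro z ⟨w, ⟨hwv, hR⟩, rfl⟩
      refine ⟨⟨w.2, hkey (v : ℂ) (w : ℂ) hR⟩, ?_⟩
      simp only [mem_singleton_iff]
      exact fun e => hwv (Subtype.coe_injective e)
    calc ({w : Λ | w ≠ v ∧ R v w}).encard
        = ((fun w : Λ => (w : ℂ)) '' {w : Λ | w ≠ v ∧ R v w}).encard :=
          (Set.InjOn.encard_image (Subtype.coe_injective.injOn)).symm
      _ ≤ (S \ {(v : ℂ)}).encard := Set.encard_le_encard himg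
      _ < S.encard := (hSfin.diff (t := {(v : ℂ)})).encard_lt_encard (Set.sdiff_singleton_ssubset.mpr hvS)
      _ ≤ n := hball v v.2
  obtain ⟨c, hc⟩ := exists_coloring n hn R hsym f hf hdeg
  refine ⟨fun j => {l : ℂ | ∃ hl : l ∈ Λ, c ⟨l, hl⟩ = j}, ?_, ?_⟩
  · ext z
    simp only [mem_iUnion, mem_setOf_eq]
    exact ⟨fun hz => ⟨c ⟨z, hz⟩, hz, rfl⟩, fun ⟨j, hz, _⟩ => hz⟩
  · intro j
    refine ⟨ε₁ / 2, by positivity, C₁, hC₁, ?_⟩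
    rintro l ⟨hl, hcl⟩ m ⟨hm, hcm⟩ hlm
    have hne : (⟨l, hl⟩ : Λ) ≠ ⟨m, hm⟩ := fun e => hlm (congrArg Subtype.val e)
    have hnR : ¬ R ⟨l, hl⟩ ⟨m, hm⟩ := fun hR => hc _ _ hne hR (hcl.trans hcm.symm)
    simp only [hRdef, not_or, not_lt] at hnR
    obtain ⟨h1, h2⟩ := hnR
    apply ball_disjoint_ball
    have hd : dist l m = dist (m : ℂ) l := dist_comm l m
    rw [hd]
    simp only [hrdef] at h1 h2
    linarith
end

section
/- Suppose that for all ε>0 and C>0 there exists λ ∈ Λ with more than n points of Λ in D(λ, ε e^{−Cp(λ)}) (i.e., Λ is not a union of n weakly separated sequences in the quantitative sense). Then X^{n-1}_p(Λ) ≠ X^n_p(Λ): there exists a function ω on Λ whose divided differences of order n−1 are uniformly bounded with respect to p but whose divided differences of order n are not. -/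
open Complex Metric Set

section Aux

open Finset

noncomputable def ddSum (ω : ℂ → ℂ) (V : Finset ℂ) : ℂ :=
  ∑ x ∈ V, ω x * (∏ y ∈ V.erase x, (x - y))⁻¹

lemma prod_sub_ne_zero {V : Finset ℂ} {x : ℂ} (hx : x ∉ V) : ∏ y ∈ V, (x - y) ≠ 0 := by
  rw [Finset.prod_ne_zero_iff]
  intro y hy
  exact sub_ne_zero.mpr (fun hxy => hx (hxy ▸ hy))

lemma ddSum_erase_eq (ω : ℂ → ℂ) (V : Finset ℂ) (a : ℂ) (ha : a ∈ V) :
    ddSum ω (V.erase a) =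
      ∑ x ∈ V, (if x = a then 0 else ω x * (∏ y ∈ (V.erase a).erase x, (x - y))⁻¹) := by
  rw [← Finset.add_sum_erase V
    (fun x => if x = a then 0 else ω x * (∏ y ∈ (V.erase a).erase x, (x - y))⁻¹) ha]
  simp only [eq_self_iff_true, if_true, zero_add, ddSum]
  exact Finset.sum_congr rfl (fun x hx => by rw [if_neg (Finset.ne_of_mem_erase hx)])

lemma ddSum_step (ω : ℂ → ℂ) (V : Finset ℂ) (a b : ℂ) (ha : a ∈ V) (hb : b ∈ V)
    (hab : a ≠ b) :
    (ddSum ω (V.erase a) - ddSum ω (V.erase b)) / (b - a) = ddSum ω V := by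
  have hba : b - a ≠ 0 := sub_ne_zero.mpr (Ne.symm hab)
  rw [div_eq_iff hba, ddSum_erase_eq ω V a ha, ddSum_erase_eq ω V b hb,
    ← Finset.sum_sub_distrib, ddSum, Finset.sum_mul]
  refine Finset.sum_congr rfl (fun x hx => ?_)
  by_cases hxa : x = a
  · subst hxa
    rw [if_pos rfl, if_neg hab, zero_sub]
    have hbmem : b ∈ V.erase x := Finset.mem_erase.mpr ⟨Ne.symm hab, hb⟩
    have hsplit : ∏ y ∈ V.erase x, (x - y) = (x - b) * ∏ y ∈ (V.erase x).erase b, (x - y) :=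
      (Finset.mul_prod_erase _ _ hbmem).symm
    have hcomm : (V.erase b).erase x = (V.erase x).erase b := Finset.erase_right_comm
    rw [hsplit, hcomm]
    have hP : ∏ y ∈ (V.erase x).erase b, (x - y) ≠ 0 :=
      prod_sub_ne_zero (fun h => Finset.notMem_erase _ _ (Finset.mem_erase.mp h).2)
    have hxb : x - b ≠ 0 := sub_ne_zero.mpr hab
    field_simp
    ring
  · by_cases hxb : x = b
    · subst hxb
      rw [if_neg hxa, if_pos rfl, sub_zero]
      have hamem : a ∈ V.erase x := Finset.mem_erase.mpr ⟨hab, ha⟩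
      have hsplit : ∏ y ∈ V.erase x, (x - y) = (x - a) * ∏ y ∈ (V.erase x).erase a, (x - y) :=
        (Finset.mul_prod_erase _ _ hamem).symm
      have hcomm : (V.erase a).erase x = (V.erase x).erase a := Finset.erase_right_comm
      rw [hsplit, hcomm]
      have hP : ∏ y ∈ (V.erase x).erase a, (x - y) ≠ 0 :=
        prod_sub_ne_zero (fun h => Finset.notMem_erase _ _ (Finset.mem_erase.mp h).2)
      have hxa' : x - a ≠ 0 := sub_ne_zero.mpr hxa
      field_simp
    · rw [if_neg hxa, if_neg hxb]
      have hamem : a ∈ V.erase x := Finset.mem_erase.mpr ⟨fun h => hxa h.symm, ha⟩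
      have hbmem : b ∈ (V.erase x).erase a :=
        Finset.mem_erase.mpr ⟨Ne.symm hab, Finset.mem_erase.mpr ⟨fun h => hxb h.symm, hb⟩⟩
      have hs1 : ∏ y ∈ V.erase x, (x - y) = (x - a) * ∏ y ∈ (V.erase x).erase a, (x - y) :=
        (Finset.mul_prod_erase _ _ hamem).symm
      have hs2 : ∏ y ∈ (V.erase x).erase a, (x - y) =
          (x - b) * ∏ y ∈ ((V.erase x).erase a).erase b, (x - y) :=
        (Finset.mul_prod_erase _ _ hbmem).symm
      have hc1 : (V.erase a).erase x = (V.erase x).erase a := Finset.erase_right_comm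
      have hamem2 : a ∈ (V.erase x).erase b :=
        Finset.mem_erase.mpr ⟨hab, Finset.mem_erase.mpr ⟨fun h => hxa h.symm, ha⟩⟩
      have hs3 : ∏ y ∈ (V.erase x).erase b, (x - y) =
          (x - a) * ∏ y ∈ ((V.erase x).erase b).erase a, (x - y) :=
        (Finset.mul_prod_erase _ _ hamem2).symm
      have hc2 : (V.erase b).erase x = (V.erase x).erase b := Finset.erase_right_comm
      have hc3 : ((V.erase x).erase b).erase a = ((V.erase x).erase a).erase b :=
        Finset.erase_right_comm
      rw [hc1, hc2, hs1, hs2, hs3, hc3]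
      have hQ : ∏ y ∈ ((V.erase x).erase a).erase b, (x - y) ≠ 0 :=
        prod_sub_ne_zero (fun h =>
          Finset.notMem_erase x V (Finset.mem_erase.mp (Finset.mem_erase.mp h).2).2)
      have hxa' : x - a ≠ 0 := sub_ne_zero.mpr hxa
      have hxb' : x - b ≠ 0 := sub_ne_zero.mpr hxb
      field_simp
      ring

lemma image_succ_univ (n : ℕ) : Finset.univ.image (Fin.succ : Fin n → Fin (n+1)) =
    Finset.univ.erase 0 := by
  ext j
  simp [Fin.exists_succ_eq, eq_comm]

lemma image_castSucc_univ (n : ℕ) : Finset.univ.image (Fin.castSucc : Fin n → Fin (n+1)) =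
    Finset.univ.erase (Fin.last n) := by
  ext j
  simp [Fin.exists_castSucc_eq, eq_comm]

lemma divDiff_eq_ddSum : ∀ (k : ℕ) (ω : ℂ → ℂ) (z : Fin (k+1) → ℂ),
    Function.Injective z → divDiff k ω z = ddSum ω (Finset.univ.image z)
  | 0, ω, z, hz => by
    simp [divDiff, ddSum, Finset.univ_unique]
  | (k+1), ω, z, hz => by
    have hlast0 : (0 : Fin (k+2)) ≠ Fin.last (k+1) := by simp [Fin.ext_iff]
    have h1 : divDiff k ω (fun i => z i.succ) =
        ddSum ω ((Finset.univ.image z).erase (z 0)) := by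
      rw [divDiff_eq_ddSum k ω (fun i => z i.succ) (fun a b hab => Fin.succ_injective _ (hz hab))]
      congr 1
      show Finset.image (z ∘ Fin.succ) Finset.univ = _
      rw [← Finset.image_image, image_succ_univ, Finset.image_erase hz]
    have h2 : divDiff k ω (fun i => z i.castSucc) =
        ddSum ω ((Finset.univ.image z).erase (z (Fin.last (k+1)))) := by
      rw [divDiff_eq_ddSum k ω (fun i => z i.castSucc) (fun a b hab => Fin.castSucc_injective _ (hz hab))]
      congr 1
      show Finset.image (z ∘ Fin.castSucc) Finset.univ = _
      rw [← Finset.image_image, image_castSucc_univ, Finset.image_erase hz]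
    show (divDiff k ω (fun i => z i.succ) - divDiff k ω (fun i => z i.castSucc)) /
        (z (Fin.last (k+1)) - z 0) = _
    rw [h1, h2]
    exact ddSum_step ω (Finset.univ.image z) (z 0) (z (Fin.last (k+1)))
      (Finset.mem_image_of_mem z (Finset.mem_univ _))
      (Finset.mem_image_of_mem z (Finset.mem_univ _))
      (fun hEq => hlast0 (hz hEq))



open Classical in
noncomputable def Fb (Λ : Set ℂ) (b : ℂ) : Finset ℂ :=
  if h : ((Λ \ {b}) ∩ Metric.closedBall b 1).Finite then h.toFinset else ∅

noncomputable def mfun (Λ : Set ℂ) (k : ℕ) (b : ℂ) : ℝ :=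
  ((Fb Λ b).powerset.filter (fun T => T.card ≤ k)).inf'
    ⟨∅, by simp⟩ (fun T => ∏ t ∈ T, min 1 (dist b t))

lemma Fb_mem {Λ : Set ℂ} {b : ℂ} (hfin : ((Λ \ {b}) ∩ Metric.closedBall b 1).Finite)
    {t : ℂ} : t ∈ Fb Λ b ↔ t ∈ Λ ∧ t ≠ b ∧ dist b t ≤ 1 := by
  rw [Fb]
  rw [dif_pos hfin, Set.Finite.mem_toFinset]
  constructor
  · rintro ⟨⟨h1, h2⟩, h3⟩
    exact ⟨h1, by simpa using h2, by rw [dist_comm]; exact mem_closedBall.mp h3⟩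
  · rintro ⟨h1, h2, h3⟩
    exact ⟨⟨h1, by simpa using h2⟩, mem_closedBall.mpr (by rw [dist_comm]; exact h3)⟩

lemma mfun_pos {Λ : Set ℂ} (k : ℕ) {b : ℂ}
    (hfin : ((Λ \ {b}) ∩ Metric.closedBall b 1).Finite) : 0 < mfun Λ k b := by
  rw [mfun]
  refine (Finset.lt_inf'_iff _).mpr ?_
  intro T hT
  rw [Finset.mem_filter, Finset.mem_powerset] at hT
  refine Finset.prod_pos (fun t ht => ?_)
  have := (Fb_mem hfin).mp (hT.1 ht)
  exact lt_min one_pos (dist_pos.mpr (fun hbt => this.2.1 hbt.symm))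

lemma mfun_le {Λ : Set ℂ} {k : ℕ} {b : ℂ}
    (hfin : ((Λ \ {b}) ∩ Metric.closedBall b 1).Finite) {T : Finset ℂ}
    (hT : ∀ t ∈ T, t ∈ Λ ∧ t ≠ b) (hcard : T.card ≤ k) :
    mfun Λ k b ≤ ∏ t ∈ T, min 1 (dist b t) := by
  classical
  set T' := T.filter (fun t => t ∈ Fb Λ b) with hT'
  have hmem : T' ∈ (Fb Λ b).powerset.filter (fun T => T.card ≤ k) := by
    rw [Finset.mem_filter, Finset.mem_powerset]
    exact ⟨fun t ht => (Finset.mem_filter.mp ht).2,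
      le_trans (Finset.card_filter_le _ _) hcard⟩
  have h1 : mfun Λ k b ≤ ∏ t ∈ T', min 1 (dist b t) := Finset.inf'_le _ hmem
  have h2 : ∏ t ∈ T, min 1 (dist b t) =
      (∏ t ∈ T', min 1 (dist b t)) * ∏ t ∈ T.filter (fun t => ¬ t ∈ Fb Λ b), min 1 (dist b t) :=
    (Finset.prod_filter_mul_prod_filter_not T _ _).symm
  have h3 : ∏ t ∈ T.filter (fun t => ¬ t ∈ Fb Λ b), min 1 (dist b t) = 1 := by
    refine Finset.prod_eq_one (fun t ht => ?_)
    obtain ⟨htT, htn⟩ := Finset.mem_filter.mp ht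
    have : ¬ (dist b t ≤ 1) := fun hd => htn ((Fb_mem hfin).mpr ⟨(hT t htT).1, (hT t htT).2, hd⟩)
    exact min_eq_left (by linarith [not_le.mp this])
  rw [h2, h3, mul_one]
  exact h1

lemma mfun_eq {Λ : Set ℂ} (k : ℕ) {b : ℂ}
    (hfin : ((Λ \ {b}) ∩ Metric.closedBall b 1).Finite) :
    ∃ T : Finset ℂ, (∀ t ∈ T, t ∈ Λ ∧ t ≠ b ∧ dist b t ≤ 1) ∧ T.card ≤ k ∧
      mfun Λ k b = ∏ t ∈ T, dist b t := by
  obtain ⟨T, hTmem, hTeq⟩ := Finset.exists_mem_eq_inf'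
    (⟨∅, by simp⟩ : ((Fb Λ b).powerset.filter (fun T => T.card ≤ k)).Nonempty)
    (fun T => ∏ t ∈ T, min 1 (dist b t))
  rw [Finset.mem_filter, Finset.mem_powerset] at hTmem
  have hmem : ∀ t ∈ T, t ∈ Λ ∧ t ≠ b ∧ dist b t ≤ 1 :=
    fun t ht => (Fb_mem hfin).mp (hTmem.1 ht)
  refine ⟨T, hmem, hTmem.2, ?_⟩
  rw [mfun, hTeq]
  exact Finset.prod_congr rfl (fun t ht => min_eq_right (hmem t ht).2.2)


lemma abs_ddSum_le (ω : ℂ → ℂ) (V : Finset ℂ)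
    (hω : ∀ x ∈ V, ‖ω x‖ ≤ ∏ y ∈ V.erase x, dist x y) :
    ‖ddSum ω V‖ ≤ V.card := by
  refine le_trans (norm_sum_le _ _) ?_
  have h1 : ∀ x ∈ V, ‖ω x * (∏ y ∈ V.erase x, (x - y))⁻¹‖ ≤ 1 := by
    intro x hx
    rw [norm_mul, norm_inv]
    have habs : ‖∏ y ∈ V.erase x, (x - y)‖ = ∏ y ∈ V.erase x, dist x y := by
      rw [norm_prod]
      exact Finset.prod_congr rfl (fun y _ => (Complex.dist_eq x y).symm)
    have hpos : 0 < ∏ y ∈ V.erase x, dist x y :=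
      Finset.prod_pos (fun y hy => dist_pos.mpr (Finset.ne_of_mem_erase hy).symm)
    rw [habs, ← div_eq_mul_inv, div_le_one hpos]
    exact hω x hx
  calc ∑ x ∈ V, ‖ω x * (∏ y ∈ V.erase x, (x - y))⁻¹‖
      ≤ ∑ _x ∈ V, (1:ℝ) := Finset.sum_le_sum h1
    _ = V.card := by simp

lemma exists_enum (V : Finset ℂ) (n : ℕ) (h : V.card = n) :
    ∃ z : Fin n → ℂ, Function.Injective z ∧ Finset.univ.image z = V := by
  subst h
  refine ⟨fun i => (V.equivFin.symm i : ℂ), fun i j hij => ?_, ?_⟩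
  · exact V.equivFin.symm.injective (Subtype.coe_injective hij)
  · ext x
    simp only [Finset.mem_image, Finset.mem_univ, true_and]
    constructor
    · rintro ⟨i, rfl⟩
      exact (V.equivFin.symm i).2
    · intro hx
      exact ⟨V.equivFin ⟨x, hx⟩, by simp⟩

end Aux

section Aux2


lemma finite_inter_closedBall (Λ : Set ℂ) (hΛd : DiscreteSet Λ) (c : ℂ) (R : ℝ) :
    (Λ ∩ closedBall c R).Finite := by
  by_contra hinf
  obtain ⟨x, -, hx⟩ := (Set.Infinite.exists_accPt_of_subset_isCompact hinf
    (isCompact_closedBall c R) inter_subset_right)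
  exact hΛd x (hx.mono (Filter.principal_mono.mpr inter_subset_left))

lemma isolated (Λ : Set ℂ) (hΛd : DiscreteSet Λ) (l : ℂ) :
    ∃ t > 0, ∀ x ∈ Λ, x ≠ l → t ≤ dist x l := by
  have := hΛd l
  rw [accPt_iff_nhds] at this
  push_neg at this
  obtain ⟨U, hU, hU2⟩ := this
  obtain ⟨t, ht, htU⟩ := Metric.mem_nhds_iff.mp hU
  refine ⟨t, ht, fun x hx hxl => ?_⟩
  by_contra hlt
  push_neg at hlt
  exact hxl (hU2 x ⟨htU hlt, hx⟩)

lemma sep (Λ : Set ℂ) (hΛd : DiscreteSet Λ) (R : ℝ) :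
    ∃ δ > 0, ∀ l ∈ Λ, ‖l‖ ≤ R → ∀ x ∈ Λ, x ≠ l → δ ≤ dist x l := by
  choose t ht hsep using isolated Λ hΛd
  have hG : (Λ ∩ closedBall (0:ℂ) R).Finite := finite_inter_closedBall Λ hΛd 0 R
  set GF := insert (0:ℂ) hG.toFinset with hGF
  have hne : GF.Nonempty := ⟨0, Finset.mem_insert_self _ _⟩
  refine ⟨GF.inf' hne t, ?_, fun l hl hlR x hx hxl => ?_⟩
  · rw [gt_iff_lt, Finset.lt_inf'_iff]
    exact fun i _ => ht i
  · have hlG : l ∈ GF := Finset.mem_insert_of_mem (hG.mem_toFinset.mpr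
      ⟨hl, by simpa [Complex.dist_eq] using hlR⟩)
    exact le_trans (Finset.inf'_le t hlG) (hsep l x hx hxl)

lemma escape (p : ℂ → ℝ) (hp0 : ∀ z, 0 ≤ p z) (Λ : Set ℂ) (hΛd : DiscreteSet Λ) (k : ℕ)
    (h : ∀ ε > (0:ℝ), ∀ C > (0:ℝ), ∃ l ∈ Λ,
      ((k + 1 : ℕ) : ℕ∞) < (Λ ∩ ball l (ε * Real.exp (-C * p l))).encard)
    (ε₀ C R : ℝ) (hε₀ : 0 < ε₀) (hC : 0 < C) :
    ∃ l ∈ Λ, R < ‖l‖ ∧ ∃ r : ℝ, 0 < r ∧ r ≤ ε₀ * Real.exp (-C * p l) ∧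
      ((k + 1 : ℕ) : ℕ∞) < (Λ ∩ ball l r).encard := by
  obtain ⟨δ, hδ, hδsep⟩ := sep Λ hΛd R
  set ε := min ε₀ (δ/2) with hεdef
  have hε : 0 < ε := lt_min hε₀ (by linarith)
  obtain ⟨l, hl, hcard⟩ := h ε hε C hC
  set r := ε * Real.exp (-C * p l) with hrdef
  have hr0 : 0 < r := mul_pos hε (Real.exp_pos _)
  have hrε : r ≤ ε := by
    have : Real.exp (-C * p l) ≤ 1 := Real.exp_le_one_iff.mpr
      (by have := hp0 l; nlinarith)
    nlinarith
  refine ⟨l, hl, ?_, r, hr0, mul_le_mul_of_nonneg_right (min_le_left _ _) (Real.exp_pos _).le,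
    hcard⟩
  -- show R < |l|
  by_contra hR
  push_neg at hR
  have h1 : (1:ℕ∞) < (Λ ∩ ball l r).encard := by
    refine lt_of_le_of_lt ?_ hcard
    exact_mod_cast Nat.one_le_iff_ne_zero.mpr (Nat.succ_ne_zero k)
  obtain ⟨w, hw, hwl⟩ := Set.exists_ne_of_one_lt_encard h1 l
  have h2 : δ ≤ dist w l := hδsep l hl hR w hw.1 hwl
  have hwlt : dist w l < r := mem_ball.mp hw.2
  have hrδ : r ≤ δ/2 := le_trans hrε (min_le_right _ _)
  linarith

lemma exists_seq {Q : ℕ → ℂ → Prop} (hQ : ∀ n R, ∃ b, Q n b ∧ R < ‖b‖) :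
    ∃ f : ℕ → ℂ, (∀ n, Q n (f n)) ∧
      ∀ m n, m < n → ‖f m‖ + 3 ≤ ‖f n‖ := by
  choose g hg1 hg2 using hQ
  let f : ℕ → ℂ := fun n => Nat.rec (g 0 0) (fun n ih => g (n+1) (‖ih‖ + 3)) n
  have hstep : ∀ n, ‖f n‖ + 3 ≤ ‖f (n+1)‖ :=
    fun n => (hg2 (n+1) (‖f n‖ + 3)).le
  have hmono : Monotone (fun n => ‖f n‖) :=
    monotone_nat_of_le_succ (fun n => by have := hstep n; linarith)
  refine ⟨f, fun n => ?_, fun m n hmn => ?_⟩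
  · cases n with
    | zero => exact hg1 0 0
    | succ n => exact hg1 (n+1) _
  · exact le_trans (by have := hstep m; linarith) (hmono hmn)

end Aux2

theorem stmt7 (p : ℂ → ℝ) (hp : IsWeight p) (Λ : Set ℂ) (hΛd : DiscreteSet Λ) (k : ℕ)
    (h : ∀ ε > (0:ℝ), ∀ C > (0:ℝ), ∃ l ∈ Λ,
      ((k + 1 : ℕ) : ℕ∞) < (Λ ∩ ball l (ε * Real.exp (-C * p l))).encard) :
    ∃ ω : ℂ → ℂ, MemX p Λ k ω ∧ ¬ MemX p Λ (k+1) ω := by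
  classical
  obtain ⟨hp0, -, hDE⟩ := hp
  obtain ⟨D₀, hD₀, E₀, hE₀, hpDE⟩ := hDE
  have hfin : ∀ b : ℂ, ((Λ \ {b}) ∩ Metric.closedBall b 1).Finite := fun b =>
    (finite_inter_closedBall Λ hΛd b 1).subset (fun x hx => ⟨hx.1.1, hx.2⟩)
  set Q : ℕ → ℂ → Prop := fun n b => b ∈ Λ ∧ ∃ r : ℝ, 0 < r ∧ r ≤ 1/2 ∧
      ((k + 1 : ℕ) : ℕ∞) < (Λ ∩ ball b r).encard ∧
      r * (2 * ((n:ℝ)+1) * Real.exp (((n:ℝ)+1) * (((k:ℝ)+2) * (D₀ * p b + E₀)))) ≤ 1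
    with hQdef
  have hQ : ∀ n R, ∃ b, Q n b ∧ R < ‖b‖ := by
    intro n R
    set N : ℝ := (n:ℝ)+1 with hN
    have hN0 : 0 < N := by positivity
    set a : ℝ := N * (((k:ℝ)+2) * E₀) with ha
    set C : ℝ := N * (((k:ℝ)+2) * D₀) + 1 with hC
    have hC0 : 0 < C := by positivity
    set ε₀ : ℝ := min (1/2) (Real.exp (-a) / (2*N)) with hε₀def
    have hε₀ : 0 < ε₀ := lt_min (by norm_num) (by positivity)
    obtain ⟨l, hl, hlR, r, hr0, hrle, hcard⟩ := escape p hp0 Λ hΛd k h ε₀ C R hε₀ hC0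
    have hexp1 : Real.exp (-C * p l) ≤ 1 := Real.exp_le_one_iff.mpr (by nlinarith [hp0 l])
    refine ⟨l, ⟨hl, r, hr0, ?_, hcard, ?_⟩, hlR⟩
    · calc r ≤ ε₀ * Real.exp (-C * p l) := hrle
        _ ≤ ε₀ * 1 := by nlinarith
        _ ≤ 1/2 := by rw [mul_one]; exact min_le_left _ _
    · have key : Real.exp (-C * p l) * Real.exp (N * (((k:ℝ)+2) * (D₀ * p l + E₀)))
          = Real.exp a * Real.exp (-(p l)) := by
        rw [← Real.exp_add, ← Real.exp_add]
        congr 1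
        rw [hC, ha]; ring
      have hεle : ε₀ ≤ Real.exp (-a) / (2*N) := min_le_right _ _
      have hexp2 : Real.exp (-(p l)) ≤ 1 := Real.exp_le_one_iff.mpr (by linarith [hp0 l])
      calc r * (2 * N * Real.exp (N * (((k:ℝ)+2) * (D₀ * p l + E₀))))
          ≤ (ε₀ * Real.exp (-C * p l)) *
              (2 * N * Real.exp (N * (((k:ℝ)+2) * (D₀ * p l + E₀)))) := by
            apply mul_le_mul_of_nonneg_right hrle
            positivity
        _ = ε₀ * (2*N) *
              (Real.exp (-C * p l) * Real.exp (N * (((k:ℝ)+2) * (D₀ * p l + E₀)))) := by ring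
        _ = ε₀ * (2*N) * (Real.exp a * Real.exp (-(p l))) := by rw [key]
        _ ≤ (Real.exp (-a) / (2*N)) * (2*N) * (Real.exp a * 1) := by
            gcongr
        _ = 1 := by
            rw [mul_one, Real.exp_neg]
            field_simp
  obtain ⟨bs, hbsQ, hbsGap⟩ := exists_seq hQ
  have hsep3 : ∀ m n, m ≠ n → (3:ℝ) ≤ dist (bs m) (bs n) := by
    have key : ∀ m n, m < n → (3:ℝ) ≤ dist (bs m) (bs n) := by
      intro m n hmn
      have h1 := hbsGap m n hmn
      have h2 : ‖bs n‖ - ‖bs m‖ ≤ ‖bs n - bs m‖ :=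
        le_trans (le_abs_self _) (abs_norm_sub_norm_le _ _)
      rw [dist_comm, Complex.dist_eq]
      linarith
    intro m n hmn
    rcases lt_or_gt_of_ne hmn with hlt | hlt
    · exact key m n hlt
    · rw [dist_comm]; exact key n m hlt
  set S : Set ℂ := Set.range bs with hSdef
  set ω : ℂ → ℂ := fun x => ((S.indicator (mfun Λ k) x : ℝ) : ℂ) with hωdef
  refine ⟨ω, ?_, ?_⟩
  · -- MemX p Λ k ω
    refine ⟨(k:ℝ)+1, by positivity, 1, one_pos, fun z hzΛ hzinj => ?_⟩
    rw [divDiff_eq_ddSum k ω z hzinj]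
    have hVcard : (Finset.univ.image z).card = k+1 := by
      rw [Finset.card_image_of_injective _ hzinj, Finset.card_univ, Fintype.card_fin]
    have hbound : ∀ x ∈ Finset.univ.image z, ‖ω x‖ ≤
        ∏ y ∈ (Finset.univ.image z).erase x, dist x y := by
      intro x hx
      have hprodnn : (0:ℝ) ≤ ∏ y ∈ (Finset.univ.image z).erase x, dist x y :=
        Finset.prod_nonneg (fun y _ => dist_nonneg)
      by_cases hxS : x ∈ S
      · simp only [hωdef, Set.indicator_of_mem hxS]
        rw [Complex.norm_real, Real.norm_eq_abs, _root_.abs_of_nonneg (mfun_pos k (hfin x)).le]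
        have hT : ∀ t ∈ (Finset.univ.image z).erase x, t ∈ Λ ∧ t ≠ x := by
          intro t ht
          obtain ⟨i, -, rfl⟩ := Finset.mem_image.mp (Finset.mem_of_mem_erase ht)
          exact ⟨hzΛ i, Finset.ne_of_mem_erase ht⟩
        have hcard' : ((Finset.univ.image z).erase x).card ≤ k := by
          rw [Finset.card_erase_of_mem hx, hVcard]
          omega
        refine le_trans (mfun_le (hfin x) hT hcard') ?_
        exact Finset.prod_le_prod (fun t _ => le_min zero_le_one dist_nonneg)
          (fun t _ => min_le_right _ _)
      · simp only [hωdef, Set.indicator_of_notMem hxS]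
        simpa using hprodnn
    refine le_trans (abs_ddSum_le ω _ hbound) ?_
    rw [hVcard]
    have hexp : (1:ℝ) ≤ Real.exp (1 * ∑ i, p (z i)) := by
      rw [Real.one_le_exp_iff]
      have : (0:ℝ) ≤ ∑ i, p (z i) := Finset.sum_nonneg (fun i _ => hp0 _)
      linarith
    push_cast
    nlinarith [hexp]
  · -- ¬ MemX p Λ (k+1) ω
    rintro ⟨A, hA, B, hB, hbd⟩
    set n : ℕ := ⌈max A B⌉₊ with hn
    have hAn : A ≤ (n:ℝ)+1 :=
      le_trans (le_max_left A B) (le_trans (Nat.le_ceil _) (by rw [hn]; linarith))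
    have hBn : B ≤ (n:ℝ)+1 :=
      le_trans (le_max_right A B) (le_trans (Nat.le_ceil _) (by rw [hn]; linarith))
    obtain ⟨hbΛ, r, hr0, hr12, hcard, hrkey⟩ := hbsQ n
    set b : ℂ := bs n with hbdef
    obtain ⟨T₀, hT₀mem, hT₀card, hT₀eq⟩ := mfun_eq k (hfin b)
    have hk2 : ((k+2:ℕ) : ℕ∞) ≤ (Λ ∩ ball b r).encard := by
      have h1 : ((k+1:ℕ) : ℕ∞) + 1 ≤ (Λ ∩ ball b r).encard :=
        (ENat.add_one_le_iff (by exact_mod_cast ENat.coe_ne_top (k+1))).mpr hcard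
      refine le_trans (le_of_eq ?_) h1
      push_cast
      ring
    obtain ⟨U', hU'sub, hU'encard⟩ := Set.exists_subset_encard_eq hk2
    have hU'fin : U'.Finite := Set.finite_of_encard_eq_coe hU'encard
    set U := hU'fin.toFinset with hUdef
    have hUcard : U.card = k+2 := by
      have h2 := hU'fin.encard_eq_coe_toFinset_card
      rw [hU'encard] at h2
      exact_mod_cast h2.symm
    have hUsub : ∀ x ∈ U, x ∈ Λ ∧ dist x b < r := by
      intro x hx
      have h3 := hU'sub (hU'fin.mem_toFinset.mp hx)
      exact ⟨h3.1, mem_ball.mp h3.2⟩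
    set W0 := U \ insert b T₀ with hW0def
    have hW0card : k+1 - T₀.card ≤ W0.card := by
      have h1 := Finset.le_card_sdiff (insert b T₀) U
      rw [← hW0def] at h1
      have h2 : (insert b T₀).card ≤ T₀.card + 1 := Finset.card_insert_le _ _
      omega
    obtain ⟨E, hEsub, hEcard⟩ := Finset.exists_subset_card_eq hW0card
    have hbT₀ : b ∉ T₀ := fun hb => (hT₀mem b hb).2.1 rfl
    have hbE : b ∉ E := fun hb => (Finset.mem_sdiff.mp (hEsub hb)).2 (Finset.mem_insert_self _ _)
    have hdisj : Disjoint T₀ E := Finset.disjoint_left.mpr (fun {t} htT htE =>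
      (Finset.mem_sdiff.mp (hEsub htE)).2 (Finset.mem_insert_of_mem htT))
    have hTEcard : (T₀ ∪ E).card = k+1 := by
      rw [Finset.card_union_of_disjoint hdisj, hEcard]
      omega
    set Vf := insert b (T₀ ∪ E) with hVfdef
    have hbTE : b ∉ T₀ ∪ E := by
      rw [Finset.mem_union]
      rintro (hb | hb)
      · exact hbT₀ hb
      · exact hbE hb
    have hVfcard : Vf.card = k+2 := by
      rw [hVfdef, Finset.card_insert_of_notMem hbTE, hTEcard]
    obtain ⟨z, hzinj, hzim⟩ := exists_enum Vf (k+2) hVfcard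
    have hVfΛ : ∀ x ∈ Vf, x ∈ Λ := by
      intro x hx
      rcases Finset.mem_insert.mp hx with rfl | hx
      · exact hbΛ
      rcases Finset.mem_union.mp hx with hx | hx
      · exact (hT₀mem x hx).1
      · exact (hUsub x (Finset.mem_sdiff.mp (hEsub hx)).1).1
    have hVfnear : ∀ x ∈ Vf, dist x b ≤ 1 := by
      intro x hx
      rcases Finset.mem_insert.mp hx with rfl | hx
      · simp
      rcases Finset.mem_union.mp hx with hx | hx
      · rw [dist_comm]; exact (hT₀mem x hx).2.2
      · have h4 := (hUsub x (Finset.mem_sdiff.mp (hEsub hx)).1).2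
        linarith
    have hbS : b ∈ S := ⟨n, rfl⟩
    have hnotS : ∀ x ∈ Vf, x ≠ b → x ∉ S := by
      intro x hx hxb hxS
      obtain ⟨m, rfl⟩ := hxS
      have hmn : m ≠ n := fun hEq => hxb (by rw [hEq])
      have h5 := hsep3 m n hmn
      have h6 := hVfnear _ hx
      rw [hbdef] at h6
      linarith
    have hdd : divDiff (k+1) ω z = ((mfun Λ k b : ℝ) : ℂ) * (∏ y ∈ T₀ ∪ E, (b - y))⁻¹ := by
      rw [divDiff_eq_ddSum (k+1) ω z hzinj, hzim, ddSum]
      rw [Finset.sum_eq_single_of_mem b (Finset.mem_insert_self _ _) ?_]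
      · rw [Finset.erase_insert hbTE]
        congr 1
        simp only [hωdef, Set.indicator_of_mem hbS]
      · intro x hx hxb
        have h7 : ω x = 0 := by
          simp only [hωdef, Set.indicator_of_notMem (hnotS x hx hxb)]
          norm_num
        rw [h7, zero_mul]
    set P : ℝ := ∏ t ∈ T₀, dist b t with hPdef
    set Qd : ℝ := ∏ y ∈ E, dist b y with hQddef
    have hEne : E.Nonempty := Finset.card_pos.mp (by omega)
    have hEdist : ∀ y ∈ E, 0 < dist b y ∧ dist b y ≤ r := by
      intro y hy
      have h8 := (hUsub y (Finset.mem_sdiff.mp (hEsub hy)).1).2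
      have h9 : y ≠ b := fun hEq => hbE (hEq ▸ hy)
      rw [dist_comm]
      exact ⟨dist_pos.mpr h9, h8.le⟩
    have hQd0 : 0 < Qd := Finset.prod_pos (fun y hy => (hEdist y hy).1)
    have hQdr : Qd ≤ r := by
      calc Qd ≤ ∏ _y ∈ E, r := Finset.prod_le_prod
            (fun y hy => (hEdist y hy).1.le) (fun y hy => (hEdist y hy).2)
        _ = r ^ E.card := Finset.prod_const r
        _ ≤ r ^ 1 := pow_le_pow_of_le_one hr0.le (by linarith) (by omega)
        _ = r := pow_one r
    have hP0 : 0 < P := by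
      rw [← hT₀eq]
      exact mfun_pos k (hfin b)
    have habs : ‖divDiff (k+1) ω z‖ = Qd⁻¹ := by
      rw [hdd, norm_mul, norm_inv, Complex.norm_real, Real.norm_eq_abs,
        _root_.abs_of_nonneg (mfun_pos k (hfin b)).le, norm_prod]
      have h10 : ∏ y ∈ T₀ ∪ E, ‖b - y‖ = P * Qd := by
        rw [← Finset.prod_union hdisj]
        exact Finset.prod_congr rfl (fun y _ => (Complex.dist_eq b y).symm)
      rw [h10, hT₀eq, mul_inv, ← mul_assoc, mul_inv_cancel₀ hP0.ne', one_mul]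
    have hzmem : ∀ i, z i ∈ Λ := fun i =>
      hVfΛ _ (by rw [← hzim]; exact Finset.mem_image_of_mem z (Finset.mem_univ i))
    have hble := hbd z hzmem hzinj
    rw [habs] at hble
    set X : ℝ := Real.exp (((n:ℝ)+1) * (((k:ℝ)+2) * (D₀ * p b + E₀))) with hX
    have hX0 : 0 < X := Real.exp_pos _
    have hsum : ∑ i, p (z i) ≤ ((k:ℝ)+2) * (D₀ * p b + E₀) := by
      have heach : ∀ i : Fin (k+2), p (z i) ≤ D₀ * p b + E₀ := by
        intro i
        refine hpDE (z i) b ?_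
        rw [← Complex.dist_eq]
        exact hVfnear _ (by rw [← hzim]; exact Finset.mem_image_of_mem z (Finset.mem_univ i))
      calc ∑ i, p (z i) ≤ ∑ _i : Fin (k+2), (D₀ * p b + E₀) :=
            Finset.sum_le_sum (fun i _ => heach i)
        _ = ((k:ℝ)+2) * (D₀ * p b + E₀) := by
            rw [Finset.sum_const, Finset.card_univ, Fintype.card_fin, nsmul_eq_mul]
            push_cast
            ring
    have hsumnn : (0:ℝ) ≤ ∑ i, p (z i) := Finset.sum_nonneg (fun i _ => hp0 _)
    have hDnn : (0:ℝ) ≤ D₀ * p b + E₀ := add_nonneg (mul_nonneg hD₀.le (hp0 b)) hE₀.le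
    have h11 : A * Real.exp (B * ∑ i, p (z i)) ≤ ((n:ℝ)+1) * X := by
      refine mul_le_mul hAn (Real.exp_le_exp.mpr ?_) (Real.exp_pos _).le (by positivity)
      calc B * ∑ i, p (z i) ≤ ((n:ℝ)+1) * ∑ i, p (z i) :=
            mul_le_mul_of_nonneg_right hBn hsumnn
        _ ≤ ((n:ℝ)+1) * (((k:ℝ)+2) * (D₀ * p b + E₀)) := by
            apply mul_le_mul_of_nonneg_left hsum
            positivity
    have h12 : r⁻¹ ≤ Qd⁻¹ := by
      apply inv_anti₀ hQd0 hQdr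
    have h13 : (1:ℝ) ≤ r * (((n:ℝ)+1) * X) := by
      have h14 : r⁻¹ ≤ ((n:ℝ)+1) * X := le_trans h12 (le_trans hble h11)
      have h15 := mul_le_mul_of_nonneg_left h14 hr0.le
      rw [mul_inv_cancel₀ hr0.ne'] at h15
      exact h15
    nlinarith [hrkey, h13, hX0]
end

section
/- Let Λ₁,…,Λ_n be weakly separated sequences in ℂ with respect to the weight p. Then there exist positive constants a, b, B₁, B₂, ε, a subsequence 𝓛 ⊂ Λ₁∪⋯∪Λ_n, and disks D_λ = D(λ, r_λ) for λ ∈ 𝓛, such that: (i) Λ₁∪⋯∪Λ_n ⊂ ∪_{λ∈𝓛} D_λ; (ii) aε e^{−B₁p(λ)} ≤ r_λ ≤ bε e^{−B₂p(λ)} for all λ ∈ 𝓛; (iii) dist(D_λ, D_{λ'}) ≥ aε e^{−B₁p(λ)} for distinct λ, λ' ∈ 𝓛; (iv) each D_λ contains at most one point of each Λ_j. -/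
open Complex Metric Set

private lemma dist_of_disjoint_balls {l m : ℂ} {r s : ℝ} (hr : 0 < r) (hs : 0 < s)
    (h : Disjoint (ball l r) (ball m s)) : r + s ≤ dist l m := by
  by_contra hlt
  push_neg at hlt
  have hmem : ∀ z : ℂ, z ∈ ball l r → z ∈ ball m s → False := fun z h1 h2 =>
    Set.disjoint_left.mp h h1 h2
  rcases le_or_gt (dist l m) 0 with hd | hd
  · have : l = m := by
      have := dist_nonneg (x := l) (y := m)
      have : dist l m = 0 := le_antisymm hd this
      exact dist_eq_zero.mp this
    subst this
    exact hmem l (mem_ball_self hr) (mem_ball_self hs)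
  · rcases lt_or_ge (dist l m) r with hrd | hrd
    · exact hmem m (by simpa [mem_ball, dist_comm] using hrd) (mem_ball_self hs)
    rcases lt_or_ge (dist l m) s with hsd | hsd
    · exact hmem l (mem_ball_self hr) (by simpa [mem_ball] using hsd)
    set d := dist l m with hdd
    set t := (d + r - s) / 2 with htdef
    have ht0 : 0 < t := by
      have : s ≤ d := hsd
      simp only [htdef]
      linarith
    have htr : t < r := by simp only [htdef]; linarith
    have hts : d - t < s := by simp only [htdef]; linarith
    have htd : t ≤ d := by linarith
    set z : ℂ := l + (↑(t / d) : ℂ) * (m - l) with hzdef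
    have habs : ‖m - l‖ = d := by
      rw [hdd, dist_comm, Complex.dist_eq]
    have hz1 : dist z l = t := by
      rw [Complex.dist_eq]
      have h0 : z - l = (↑(t / d) : ℂ) * (m - l) := by rw [hzdef]; ring
      rw [h0, norm_mul, Complex.norm_real, Real.norm_eq_abs, habs]
      rw [_root_.abs_of_nonneg (by positivity : (0:ℝ) ≤ t / d)]
      field_simp
    have hz2 : dist z m = d - t := by
      rw [Complex.dist_eq]
      have : z - m = (↑(t / d - 1) : ℂ) * (m - l) := by
        rw [hzdef]
        push_cast
        ring
      rw [this, norm_mul, Complex.norm_real, Real.norm_eq_abs, habs]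
      have h1 : t / d - 1 ≤ 0 := by
        have : t / d ≤ 1 := by rw [div_le_one hd]; exact htd
        linarith
      rw [_root_.abs_of_nonpos h1]
      field_simp
      ring
    exact hmem z (by simp [mem_ball, hz1, htr]) (by simp [mem_ball, hz2, hts])

private lemma finite_of_separated {s : Set ℂ} {c : ℂ} {η : ℝ} (hη : 0 < η)
    (hsub : s ⊆ closedBall c 1) (hsepa : ∀ x ∈ s, ∀ y ∈ s, x ≠ y → η ≤ dist x y) :
    s.Finite := by
  obtain ⟨t, htf, hcov⟩ :=
    (Metric.totallyBounded_iff.mp (isCompact_closedBall c 1).totallyBounded) (η / 3)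
      (by positivity)
  have hsub2 : s ⊆ ⋃ y ∈ t, s ∩ ball y (η / 3) := by
    intro x hx
    obtain ⟨y, hy, hxy⟩ := Set.mem_iUnion₂.mp (hcov (hsub hx))
    exact Set.mem_iUnion₂.mpr ⟨y, hy, ⟨hx, hxy⟩⟩
  refine Set.Finite.subset (Set.Finite.biUnion htf fun y _ => ?_) hsub2
  refine Set.Subsingleton.finite ?_
  intro a ha b hb
  by_contra hne
  have h1 := hsepa a ha.1 b hb.1 hne
  have h2 : dist a b < η := by
    have := dist_triangle a y b
    have ha' : dist a y < η / 3 := mem_ball.mp ha.2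
    have hb' : dist y b < η / 3 := by rw [dist_comm]; exact mem_ball.mp hb.2
    linarith
  linarith

set_option maxHeartbeats 1000000 in
theorem stmt9 (p : ℂ → ℝ) (hp : IsWeight p) (n : ℕ) (Λs : Fin n → Set ℂ)
    (hsep : ∀ j, WeaklySeparated p (Λs j)) :
    ∃ a > (0:ℝ), ∃ b > (0:ℝ), ∃ B₁ > (0:ℝ), ∃ B₂ > (0:ℝ), ∃ ε > (0:ℝ),
    ∃ L ⊆ ⋃ j, Λs j, ∃ r : ℂ → ℝ,
      ((⋃ j, Λs j) ⊆ ⋃ l ∈ L, ball l (r l)) ∧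
      (∀ l ∈ L, a * ε * Real.exp (-B₁ * p l) ≤ r l ∧ r l ≤ b * ε * Real.exp (-B₂ * p l)) ∧
      (∀ l ∈ L, ∀ m ∈ L, l ≠ m → ∀ x ∈ ball l (r l), ∀ y ∈ ball m (r m),
        a * ε * Real.exp (-B₁ * p l) ≤ dist x y) ∧
      (∀ j, ∀ l ∈ L, (Λs j ∩ ball l (r l)).encard ≤ 1) := by
  classical
  obtain ⟨hp0, -, D0, hD0, E, hE, hDE⟩ := hp
  rcases Nat.eq_zero_or_pos n with hn | hn
  · subst hn
    refine ⟨1, one_pos, 1, one_pos, 1, one_pos, 1, one_pos, 1, one_pos, ∅,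
      Set.empty_subset _, fun _ => 1, ?_, ?_, ?_, ?_⟩
    · intro x hx
      exact absurd hx (by simp)
    · intro l hl; exact absurd hl (Set.notMem_empty l)
    · intro l hl; exact absurd hl (Set.notMem_empty l)
    · intro j; exact absurd j.2 (by omega)
  -- main case
  have hne : Nonempty (Fin n) := ⟨⟨0, hn⟩⟩
  set D := max D0 1 with hDdef
  have hD1 : (1:ℝ) ≤ D := le_max_right _ _
  have hDpos : (0:ℝ) < D := lt_of_lt_of_le one_pos hD1
  have hHar : ∀ z w : ℂ, dist z w ≤ 1 → p z ≤ D * p w + E := by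
    intro z w hzw
    have h1 := hDE z w (by rwa [← Complex.dist_eq])
    have h2 : D0 * p w ≤ D * p w :=
      mul_le_mul_of_nonneg_right (le_max_left _ _) (hp0 w)
    linarith
  choose εf hεf Cf hCf hdisj using hsep
  set ε0 := Finset.univ.inf' Finset.univ_nonempty εf with hε0def
  set C := Finset.univ.sup' Finset.univ_nonempty Cf with hCdef
  have hε0 : 0 < ε0 := (Finset.lt_inf'_iff _).mpr fun j _ => hεf j
  have hε0le : ∀ j, ε0 ≤ εf j := fun j => Finset.inf'_le _ (Finset.mem_univ j)
  have hCle : ∀ j, Cf j ≤ C := fun j => Finset.le_sup' _ (Finset.mem_univ j)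
  have hC : 0 < C := lt_of_lt_of_le (hCf ⟨0, hn⟩) (hCle _)
  set S := ⋃ j, Λs j with hSdef
  -- uniform separation
  have hsepU : ∀ j, ∀ l ∈ Λs j, ∀ m ∈ Λs j, l ≠ m →
      ε0 * Real.exp (-C * p l) + ε0 * Real.exp (-C * p m) ≤ dist l m := by
    intro j l hl m hm hnelm
    have h1 := dist_of_disjoint_balls (mul_pos (hεf j) (Real.exp_pos _))
      (mul_pos (hεf j) (Real.exp_pos _)) (hdisj j l hl m hm hnelm)
    have key : ∀ w : ℂ, ε0 * Real.exp (-C * p w) ≤ εf j * Real.exp (-Cf j * p w) := by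
      intro w
      have hexp : Real.exp (-C * p w) ≤ Real.exp (-Cf j * p w) := by
        apply Real.exp_le_exp.mpr
        nlinarith [hp0 w, hCle j]
      calc ε0 * Real.exp (-C * p w) ≤ εf j * Real.exp (-C * p w) :=
            mul_le_mul_of_nonneg_right (hε0le j) (Real.exp_pos _).le
        _ ≤ εf j * Real.exp (-Cf j * p w) :=
            mul_le_mul_of_nonneg_left hexp (hεf j).le
    calc ε0 * Real.exp (-C * p l) + ε0 * Real.exp (-C * p m)
        ≤ εf j * Real.exp (-Cf j * p l) + εf j * Real.exp (-Cf j * p m) :=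
          add_le_add (key l) (key m)
      _ ≤ dist l m := h1
  set u : ℂ → ℝ := fun z => Real.exp (-(C * D) * p z) with hudef
  have hupos : ∀ z, 0 < u z := fun z => Real.exp_pos _
  have hule : ∀ z, u z ≤ 1 := fun z =>
    Real.exp_le_one_iff.mpr (by nlinarith [mul_nonneg (mul_pos hC hDpos).le (hp0 z)])
  have hkey2 : ∀ z w : ℂ, dist z w ≤ 1 →
      Real.exp (-(C * E)) * u w ≤ Real.exp (-C * p z) := by
    intro z w h
    rw [hudef, ← Real.exp_add]
    apply Real.exp_le_exp.mpr
    have := mul_le_mul_of_nonneg_left (hHar z w h) hC.le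
    nlinarith
  set s0 := min (ε0 * Real.exp (-(C * E))) 1 / 4 with hs0def
  have hs0pos : 0 < s0 := by
    have h1 : (0:ℝ) < min (ε0 * Real.exp (-(C * E))) 1 :=
      lt_min (by positivity) one_pos
    rw [hs0def]; linarith
  have hs0le1 : s0 ≤ 1 / 4 := by
    rw [hs0def]
    have := min_le_right (ε0 * Real.exp (-(C * E))) 1
    linarith
  have h4s0 : 4 * s0 ≤ ε0 * Real.exp (-(C * E)) := by
    rw [hs0def]
    have := min_le_left (ε0 * Real.exp (-(C * E))) 1
    linarith
  set A := s0 / 8 ^ n with hAdef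
  have hApos : 0 < A := by positivity
  have h8nA : (8:ℝ) ^ n * A = s0 := by
    rw [hAdef]; field_simp
  -- uniqueness of Λs j points in small balls
  have huniq : ∀ (l : ℂ) (j : Fin n), ∀ m1 ∈ Λs j, ∀ m2 ∈ Λs j,
      dist m1 l < s0 * u l → dist m2 l < s0 * u l → m1 = m2 := by
    intro l j m1 h1 m2 h2 hd1 hd2
    by_contra hnem
    have hq := hsepU j m1 h1 m2 h2 hnem
    have hsu : s0 * u l ≤ 1 := by nlinarith [hule l, hupos l]
    have hk1 := hkey2 m1 l (le_trans hd1.le hsu)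
    have hk2 := hkey2 m2 l (le_trans hd2.le hsu)
    have htri : dist m1 m2 ≤ dist m1 l + dist m2 l := dist_triangle_right m1 m2 l
    have hul := hupos l
    nlinarith [mul_le_mul_of_nonneg_right h4s0 (hupos l).le, hε0,
      mul_le_mul_of_nonneg_left hk1 hε0.le, mul_le_mul_of_nonneg_left hk2 hε0.le]
  -- empty annulus
  have hann : ∀ l : ℂ, ∃ k : ℕ, k < n ∧ (l ∈ S → ∀ x ∈ S,
      ¬(8 ^ k * A * u l ≤ dist x l ∧ dist x l < 8 ^ (k + 1) * A * u l)) := by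
    intro l
    by_cases hl : l ∈ S
    · by_contra hcon
      push_neg at hcon
      have hcon' : ∀ k : ℕ, k < n → ∃ x ∈ S,
          8 ^ k * A * u l ≤ dist x l ∧ dist x l < 8 ^ (k + 1) * A * u l := by
        intro k hk
        obtain ⟨-, x, hx1, hx2⟩ := hcon k hk
        exact ⟨x, hx1, hx2⟩
      choose! g hgS hglb hgub using hcon'
      have hgball : ∀ k : ℕ, k < n → dist (g k) l < s0 * u l := by
        intro k hk
        have h1 : (8:ℝ) ^ (k + 1) ≤ 8 ^ n :=
          pow_le_pow_right₀ (by norm_num) (by omega)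
        have hQ := hgub k hk
        have h2 : (8:ℝ) ^ (k + 1) * A * u l ≤ 8 ^ n * A * u l :=
          mul_le_mul_of_nonneg_right (mul_le_mul_of_nonneg_right h1 hApos.le) (hupos l).le
        rw [h8nA] at h2
        linarith
      obtain ⟨j0, hj0⟩ := Set.mem_iUnion.mp hl
      have hgm : ∀ k : Fin n, ∃ j : Fin n, g k.val ∈ Λs j := by
        intro k
        exact Set.mem_iUnion.mp (hgS k.val k.isLt)
      choose jf hjf using hgm
      have hginj : ∀ k1 k2 : Fin n, g k1.val = g k2.val → k1 = k2 := by
        intro k1 k2 heq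
        by_contra hnek
        rcases Fin.lt_or_lt_of_ne hnek with hlt | hlt
        · have h1 := hglb k2.val k2.isLt
          have h2 := hgub k1.val k1.isLt
          have h3 : (8:ℝ) ^ (k1.val + 1) ≤ 8 ^ k2.val :=
            pow_le_pow_right₀ (by norm_num) (by omega)
          rw [heq] at h2
          have h4 : (8:ℝ) ^ (k1.val + 1) * A * u l ≤ 8 ^ k2.val * A * u l :=
            mul_le_mul_of_nonneg_right (mul_le_mul_of_nonneg_right h3 hApos.le) (hupos l).le
          linarith
        · have h1 := hglb k1.val k1.isLt
          have h2 := hgub k2.val k2.isLt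
          have h3 : (8:ℝ) ^ (k2.val + 1) ≤ 8 ^ k1.val :=
            pow_le_pow_right₀ (by norm_num) (by omega)
          rw [heq] at h1
          have h4 : (8:ℝ) ^ (k2.val + 1) * A * u l ≤ 8 ^ k1.val * A * u l :=
            mul_le_mul_of_nonneg_right (mul_le_mul_of_nonneg_right h3 hApos.le) (hupos l).le
          linarith
      have hjinj : Function.Injective jf := by
        intro k1 k2 heq
        apply hginj
        exact huniq l (jf k1) _ (hjf k1) _ (heq ▸ hjf k2)
          (hgball k1.val k1.isLt) (hgball k2.val k2.isLt)
      obtain ⟨k, hk⟩ := Finite.injective_iff_surjective.mp hjinj j0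
      have hgkl : g k.val = l := by
        apply huniq l j0 _ (hk ▸ hjf k) _ hj0 (hgball k.val k.isLt)
        rw [dist_self]
        exact mul_pos hs0pos (hupos l)
      have hcontr := hglb k.val k.isLt
      rw [hgkl, dist_self] at hcontr
      have : (0:ℝ) < 8 ^ k.val * A * u l :=
        mul_pos (mul_pos (pow_pos (by norm_num) _) hApos) (hupos l)
      linarith
    · exact ⟨0, hn, fun h => absurd h hl⟩
  choose K hKlt hKemp using hann
  set r : ℂ → ℝ := fun l => 2 * 8 ^ K l * A * u l with hrdef
  have hrpos : ∀ l, 0 < r l := fun l =>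
    mul_pos (mul_pos (mul_pos two_pos (pow_pos (by norm_num) _)) hApos) (hupos l)
  have hrlow : ∀ l, 2 * A * u l ≤ r l := by
    intro l
    have h1 : (1:ℝ) ≤ 8 ^ K l := one_le_pow₀ (by norm_num)
    have h2 : A * u l ≤ 8 ^ K l * (A * u l) :=
      le_mul_of_one_le_left (mul_nonneg hApos.le (hupos l).le) h1
    have h3 : r l = 2 * (8 ^ K l * (A * u l)) := by rw [hrdef]; ring
    rw [h3]
    linarith
  have hrup : ∀ l, r l ≤ s0 / 4 * u l := by
    intro l
    have hkn : K l + 1 ≤ n := hKlt l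
    have h1 : (8:ℝ) ^ (K l + 1) ≤ 8 ^ n :=
      pow_le_pow_right₀ (by norm_num) hkn
    have h2 : (8:ℝ) ^ (K l + 1) = 8 * 8 ^ K l := by rw [pow_succ]; ring
    rw [hrdef]
    have h3 : 8 * (8:ℝ) ^ K l * A ≤ 8 ^ n * A := by
      rw [← h2]
      exact mul_le_mul_of_nonneg_right h1 hApos.le
    rw [h8nA] at h3
    nlinarith [hupos l]
  have hrs0u : ∀ l, r l < s0 * u l := by
    intro l
    have h1 := hrup l
    nlinarith [mul_pos hs0pos (hupos l)]
  have hr1 : ∀ l, r l ≤ 1 := by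
    intro l
    have h1 := hrup l
    have h2 : s0 / 4 * u l ≤ s0 / 4 * 1 :=
      mul_le_mul_of_nonneg_left (hule l) (by linarith)
    linarith
  -- moat property
  have hmoat : ∀ l ∈ S, ∀ x ∈ S, dist x l < 4 * r l → dist x l < r l / 2 := by
    intro l hl x hx h4
    have hemp := hKemp l hl x hx
    by_contra hcon
    push_neg at hcon
    apply hemp
    constructor
    · calc (8:ℝ) ^ K l * A * u l = (2 * 8 ^ K l * A * u l) / 2 := by ring
        _ = r l / 2 := by rw [hrdef]
        _ ≤ dist x l := hcon
    · calc dist x l < 4 * r l := h4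
        _ = 8 ^ (K l + 1) * A * u l := by rw [hrdef, pow_succ]; ring
  -- key order
  set key : ℂ → Lex (ℝ × Lex (ℝ × ℝ)) := fun l => toLex (r l, toLex (l.re, l.im))
    with hkeydef
  have hkeyinj : Function.Injective key := by
    intro a b h
    simp only [hkeydef] at h
    have h1 := toLex_inj.mp h
    have h2 : toLex (a.re, a.im) = toLex (b.re, b.im) := congrArg Prod.snd h1
    have h3 := toLex_inj.mp h2
    exact Complex.ext (congrArg Prod.fst h3) (congrArg Prod.snd h3)
  have hkeyr : ∀ a b : ℂ, key a ≤ key b → r a ≤ r b := by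
    intro a b h
    rcases Prod.Lex.le_iff.mp h with h1 | ⟨h1, -⟩
    · exact le_of_lt h1
    · exact le_of_eq h1
  set L : Set ℂ := {l | l ∈ S ∧ ∀ m ∈ S, dist l m < max (r l) (r m) → key m ≤ key l}
    with hLdef
  -- local finiteness
  have hSfin : ∀ z : ℂ, (S ∩ closedBall z 1).Finite := by
    intro z
    have heq : S ∩ closedBall z 1 = ⋃ j, (Λs j ∩ closedBall z 1) := by
      rw [hSdef, Set.iUnion_inter]
    rw [heq]
    apply Set.finite_iUnion
    intro j
    apply finite_of_separated (η := ε0 * Real.exp (-C * (D * p z + E)))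
      (mul_pos hε0 (Real.exp_pos _)) Set.inter_subset_right
    intro x hx y hy hnexy
    have h1 := hsepU j x hx.1 y hy.1 hnexy
    have h2 : p x ≤ D * p z + E := hHar x z (mem_closedBall.mp hx.2)
    have h3 : Real.exp (-C * (D * p z + E)) ≤ Real.exp (-C * p x) := by
      apply Real.exp_le_exp.mpr
      have := mul_le_mul_of_nonneg_left h2 hC.le
      linarith
    have h4 := mul_le_mul_of_nonneg_left h3 hε0.le
    have h5 : 0 ≤ ε0 * Real.exp (-C * p y) :=
      mul_nonneg hε0.le (Real.exp_pos _).le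
    linarith
  -- covering
  have hcov : ∀ x0 ∈ S, ∃ l ∈ L, dist x0 l < r l := by
    intro x0 hx0
    set M : Set ℂ := {μ | μ ∈ S ∧ dist x0 μ < r μ} with hMdef
    have hx0M : x0 ∈ M := ⟨hx0, by rw [dist_self]; exact hrpos x0⟩
    have hMfin : M.Finite := by
      apply (hSfin x0).subset
      intro μ hμ
      refine ⟨hμ.1, mem_closedBall.mpr ?_⟩
      rw [dist_comm]
      exact le_trans hμ.2.le (hr1 μ)
    obtain ⟨lm, hlM, hlmax'⟩ := Set.Finite.exists_maximalFor key M hMfin ⟨x0, hx0M⟩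
    have hlmax : ∀ μ ∈ M, key μ ≤ key lm := by
      intro μ hμ
      rcases le_total (key μ) (key lm) with h | h
      · exact h
      · exact hlmax' hμ h
    refine ⟨lm, ⟨hlM.1, ?_⟩, hlM.2⟩
    intro m hm hdist
    by_contra hkm
    have hlt : key lm < key m := not_le.mp hkm
    have hrle : r lm ≤ r m := hkeyr _ _ hlt.le
    have hdm : dist lm m < r m := by
      rw [max_eq_right hrle] at hdist
      exact hdist
    have h1 : dist lm m < r m / 2 :=
      hmoat m hm lm hlM.1 (by linarith [hrpos m, hdm])
    have h2 : dist x0 lm < r lm / 2 :=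
      hmoat lm hlM.1 x0 hx0 (by linarith [hlM.2, hrpos lm])
    have h3 : dist x0 m < 4 * r m := by
      have ht := dist_triangle x0 lm m
      linarith [hrpos m, hrle]
    have h4 : dist x0 m < r m / 2 := hmoat m hm x0 hx0 h3
    have hmM : m ∈ M := ⟨hm, by linarith [h4, hrpos m]⟩
    exact hkm (hlmax m hmM)
  -- separation of L
  have hLsep : ∀ l ∈ L, ∀ m ∈ L, l ≠ m → 4 * r l ≤ dist l m ∧ 4 * r m ≤ dist l m := by
    intro l hl m hm hnelm
    have hge : max (r l) (r m) ≤ dist l m := by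
      by_contra h
      push_neg at h
      have h1 := hl.2 m hm.1 h
      have h2 := hm.2 l hl.1 (by rw [dist_comm, max_comm]; exact h)
      exact hnelm (hkeyinj (le_antisymm h2 h1))
    have hrl : r l ≤ dist l m := le_trans (le_max_left _ _) hge
    have hrm : r m ≤ dist l m := le_trans (le_max_right _ _) hge
    constructor
    · by_contra h
      push_neg at h
      have hmo := hmoat l hl.1 m hm.1 (by rwa [dist_comm])
      rw [dist_comm] at hmo
      linarith [hrpos l]
    · by_contra h
      push_neg at h
      have hmo := hmoat m hm.1 l hl.1 h
      linarith [hrpos m, hrm]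
  -- conclusion
  refine ⟨2 * A, by positivity, s0, hs0pos, C * D, mul_pos hC hDpos,
    C * D, mul_pos hC hDpos, 1, one_pos, L, fun l hl => hl.1, r, ?_, ?_, ?_, ?_⟩
  · intro x hx
    obtain ⟨l, hlL, hdist⟩ := hcov x hx
    exact Set.mem_biUnion hlL (mem_ball.mpr hdist)
  · intro l hl
    have he1 : 2 * A * 1 * Real.exp (-(C * D) * p l) = 2 * A * u l := by
      simp only [hudef]; ring
    have he2 : s0 * 1 * Real.exp (-(C * D) * p l) = s0 * u l := by
      simp only [hudef]; ring
    constructor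
    · rw [he1]; exact hrlow l
    · rw [he2]; exact (hrs0u l).le
  · intro l hl m hm hnelm x hx y hy
    obtain ⟨h1, h2⟩ := hLsep l hl m hm hnelm
    have hx' : dist x l < r l := mem_ball.mp hx
    have hy' : dist y m < r m := mem_ball.mp hy
    have htri : dist l m ≤ dist l x + dist x y + dist y m := dist_triangle4 l x y m
    rw [dist_comm l x] at htri
    have hgoal : 2 * A * u l ≤ dist x y := by
      have hr1' := hrlow l
      linarith [hrpos l, hrpos m]
    have he1 : 2 * A * 1 * Real.exp (-(C * D) * p l) = 2 * A * u l := by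
      simp only [hudef]; ring
    rw [he1]
    exact hgoal
  · intro j l hl
    rw [Set.encard_le_one_iff]
    intro a b ha hb
    apply huniq l j a ha.1 b hb.1
    · exact lt_of_lt_of_le (mem_ball.mp ha.2) (hrs0u l).le
    · exact lt_of_lt_of_le (mem_ball.mp hb.2) (hrs0u l).le
end

section
/- If Γ is an A_p-interpolating sequence, then there exists a constant C>0 such that the sum ∑_{γ ∈ Γ} e^{−Cp(γ)} converges. -/
open Complex Metric Set

-- Schwarz-type estimate via dslope and maximum modulus
lemma aux_schwarz (f : ℂ → ℂ) (hf : Differentiable ℂ f) (m l : ℂ) (hfm : f m = 0)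
    (hlm : dist l m ≤ 1) (M : ℝ) (hM : ∀ z ∈ sphere m (1:ℝ), ‖f z‖ ≤ M) :
    ‖f l‖ ≤ M * dist l m := by
  set g : ℂ → ℂ := dslope f m with hg
  have hgd : Differentiable ℂ g := by
    intro z
    rcases eq_or_ne z m with rfl | hz
    · obtain ⟨q, hq⟩ := hf.analyticAt z
      exact hq.has_fpower_series_dslope_fslope.differentiableAt
    · exact (differentiableAt_dslope_of_ne hz).2 (hf z)
  have hfront : ∀ z ∈ frontier (ball m (1:ℝ)), ‖g z‖ ≤ M := by
    intro z hz
    rw [frontier_ball m one_ne_zero] at hz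
    have hzm : z ≠ m := by
      intro h; rw [h] at hz; simp [mem_sphere] at hz
    rw [hg, dslope_of_ne f hzm, slope, vsub_eq_sub, hfm, sub_zero]
    have hdist : ‖z - m‖ = 1 := by
      rw [← dist_eq_norm]; exact mem_sphere.mp hz
    rw [norm_smul, norm_inv, hdist]
    simpa using hM z hz
  have hlcl : l ∈ closure (ball m (1:ℝ)) := by
    rw [closure_ball m one_ne_zero]; exact mem_closedBall.mpr hlm
  have hgl : ‖g l‖ ≤ M :=
    Complex.norm_le_of_forall_mem_frontier_norm_le isBounded_ball
      hgd.diffContOnCl hfront hlcl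
  have hfl : f l = (l - m) • g l := by
    have := sub_smul_dslope f m l
    rw [hfm, sub_zero] at this
    exact this.symm
  rw [hfl, norm_smul]
  calc ‖l - m‖ * ‖g l‖ ≤ ‖l - m‖ * M := mul_le_mul_of_nonneg_left hgl (norm_nonneg _)
    _ = M * dist l m := by rw [dist_eq_norm]; ring

lemma aux_sep (p : ℂ → ℝ) (hp0 : ∀ z, 0 ≤ p z) {D E : ℝ} (hD : 0 < D) (hE : 0 < E)
    (hDE : ∀ z w : ℂ, ‖z - w‖ ≤ 1 → p z ≤ D * p w + E)
    (Γ : Set ℂ) (hU : UnifInterp p Γ) :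
    ∃ δ, 0 < δ ∧ δ ≤ 1 ∧ ∃ C₀, 0 < C₀ ∧ ∀ l ∈ Γ, ∀ m ∈ Γ, l ≠ m →
      δ * Real.exp (-C₀ * p m) ≤ dist l m := by
  classical
  obtain ⟨A', hA', B', hB', hUI⟩ := hU 1 one_pos 1 one_pos
  refine ⟨min 1 (A' * Real.exp (B' * E))⁻¹, lt_min one_pos (by positivity),
    min_le_left _ _, B' * D, by positivity, ?_⟩
  intro l hl m hm hlm
  set ω : ℂ → ℂ := fun z => if z = l then 1 else 0 with hω
  have hωb : ∀ x ∈ Γ, ‖ω x‖ ≤ 1 * Real.exp (1 * p x) := by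
    intro x _
    rcases eq_or_ne x l with rfl | h
    · simp only [hω, if_pos rfl, norm_one, one_mul]
      nlinarith [Real.add_one_le_exp (p x), hp0 x]
    · simp only [hω, if_neg h, norm_zero, one_mul]
      positivity
  obtain ⟨f, hfd, hfb, hfΓ⟩ := hUI ω hωb
  have hfl : f l = 1 := by rw [hfΓ l hl]; simp [hω]
  have hfm : f m = 0 := by rw [hfΓ m hm]; simp [hω, Ne.symm hlm]
  set M := A' * Real.exp (B' * (D * p m + E)) with hM
  have hM0 : 0 < M := by positivity
  have hMinv : (min 1 (A' * Real.exp (B' * E))⁻¹) * Real.exp (-(B' * D) * p m) ≤ M⁻¹ := by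
    have h1 : M = (A' * Real.exp (B' * E)) * Real.exp (B' * D * p m) := by
      rw [hM, show B' * (D * p m + E) = B' * D * p m + B' * E by ring, Real.exp_add]; ring
    have h2 : M⁻¹ = (A' * Real.exp (B' * E))⁻¹ * Real.exp (-(B' * D) * p m) := by
      rw [h1, show -(B' * D) * p m = -(B' * D * p m) by ring, Real.exp_neg, mul_inv]
    rw [h2]
    exact mul_le_mul_of_nonneg_right (min_le_right 1 ((A' * Real.exp (B' * E))⁻¹))
      (Real.exp_pos _).le
  rcases le_or_gt (dist l m) 1 with hd | hd
  · have hs : ∀ z ∈ sphere m (1:ℝ), ‖f z‖ ≤ M := by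
      intro z hz
      have hz1 : ‖z - m‖ ≤ 1 := by
        have := mem_sphere.mp hz
        rw [Complex.dist_eq] at this
        rw [this]
      have hpz := hDE z m hz1
      calc ‖f z‖ ≤ A' * Real.exp (B' * p z) := by
            simpa using hfb z
        _ ≤ M := by
            rw [hM]
            exact mul_le_mul_of_nonneg_left (Real.exp_le_exp.mpr (by nlinarith)) hA'.le
    have h1 := aux_schwarz f hfd m l hfm hd M hs
    rw [hfl, norm_one] at h1
    have hdm : M⁻¹ ≤ dist l m := by
      have h2 : M⁻¹ * 1 ≤ M⁻¹ * (M * dist l m) :=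
        mul_le_mul_of_nonneg_left h1 (inv_pos.mpr hM0).le
      rwa [mul_one, ← mul_assoc, inv_mul_cancel₀ hM0.ne', one_mul] at h2
    exact le_trans hMinv hdm
  · have e1 : Real.exp (-(B' * D) * p m) ≤ 1 :=
      Real.exp_le_one_iff.mpr (by nlinarith [mul_nonneg (mul_pos hB' hD).le (hp0 m)])
    have e0 : (0:ℝ) ≤ Real.exp (-(B' * D) * p m) := (Real.exp_pos _).le
    have m1 : min 1 (A' * Real.exp (B' * E))⁻¹ ≤ 1 := min_le_left _ _
    have m0 : (0:ℝ) < min 1 (A' * Real.exp (B' * E))⁻¹ := lt_min one_pos (by positivity)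
    nlinarith

open scoped ENNReal
open MeasureTheory

theorem stmt12 (p : ℂ → ℝ) (hp : IsWeight p) (Γ : Set ℂ)
    (hI : Interpolating p Γ) (hU : UnifInterp p Γ) :
    ∃ C > 0, Summable (fun γ : Γ => Real.exp (-C * p γ)) := by
  obtain ⟨hp0, ⟨K, hK, hKlog⟩, ⟨D, hD, E, hE, hDE⟩⟩ := hp
  obtain ⟨δ, hδ0, hδ1, C₀, hC₀, hsep⟩ := aux_sep p hp0 hD hE hDE Γ hU
  set ε := δ / 2 with hε
  set C₂ := 2 * C₀ + 2 * D / K with hC₂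
  have hε0 : 0 < ε := by rw [hε]; positivity
  refine ⟨C₂, by positivity, ?_⟩
  set r : Γ → ℝ := fun γ => ε * Real.exp (-C₀ * p γ) with hr
  set B : Γ → Set ℂ := fun γ => ball (γ:ℂ) (r γ) with hB
  have hr0 : ∀ γ, 0 < r γ := fun γ => by rw [hr]; positivity
  have hr1 : ∀ γ, r γ ≤ 1 := by
    intro γ
    have h1 : Real.exp (-C₀ * p ↑γ) ≤ 1 :=
      Real.exp_le_one_iff.mpr (by nlinarith [mul_nonneg hC₀.le (hp0 γ)])
    show ε * Real.exp (-C₀ * p ↑γ) ≤ 1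
    nlinarith [Real.exp_nonneg (-C₀ * p ↑γ), hδ1, hε0]
  have hdisj : ∀ a b : Γ, a ≠ b → Disjoint (B a) (B b) := by
    intro a b hab
    have hne : (a:ℂ) ≠ (b:ℂ) := Subtype.coe_injective.ne hab
    apply ball_disjoint_ball
    have h1 := hsep b b.2 a a.2 hne.symm
    have h2 := hsep a a.2 b b.2 hne
    rw [dist_comm] at h1
    rw [hr]
    simp only [hε] at *
    linarith
  set g : ℂ → ℝ≥0∞ := fun z => ENNReal.ofReal (((1:ℝ) + ‖z‖^2) ^ (-(4:ℝ)/2)) with hgdef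
  set μ := MeasureTheory.volume.withDensity g with hμ
  have hμfin : μ Set.univ < ⊤ := by
    rw [hμ, MeasureTheory.withDensity_apply _ MeasurableSet.univ,
      MeasureTheory.Measure.restrict_univ]
    have hfr : ((Module.finrank ℝ ℂ : ℝ)) < 4 := by
      rw [Complex.finrank_real_complex]; norm_num
    exact (integrable_rpow_neg_one_add_norm_sq hfr).lintegral_lt_top
  have key : ∀ γ : Γ, ENNReal.ofReal (Real.exp (-C₂ * p γ)) *
      ENNReal.ofReal (ε^2 * Real.pi * Real.exp (-(2*E/K))) ≤ μ (B γ) := by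
    intro γ
    have hptb : ∀ z ∈ B γ,
        ENNReal.ofReal (Real.exp (-(2*E/K)) * Real.exp (-(2*D/K) * p γ)) ≤ g z := by
      intro z hz
      apply ENNReal.ofReal_le_ofReal
      have hzγ : ‖z - γ‖ ≤ 1 := by
        have hzb := mem_ball.mp hz
        rw [Complex.dist_eq] at hzb
        linarith [hr1 γ]
      have hpz : p z ≤ D * p γ + E := hDE z γ hzγ
      have hlog : K * Real.log (1 + ‖z‖ ^ 2) ≤ p z := hKlog z
      have h1z : (0:ℝ) < 1 + ‖z‖^2 := by positivity
      have hle : 1 + ‖z‖^2 ≤ Real.exp ((D * p ↑γ + E)/K) := by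
        have hl2 : Real.log (1 + ‖z‖^2) ≤ (D * p ↑γ + E)/K := by
          rw [le_div_iff₀ hK]; nlinarith
        calc 1 + ‖z‖^2 = Real.exp (Real.log (1 + ‖z‖^2)) := (Real.exp_log h1z).symm
          _ ≤ _ := Real.exp_le_exp.mpr hl2
      have hrpow : ((1:ℝ) + ‖z‖^2) ^ (-(4:ℝ)/2) = ((1 + ‖z‖^2)^2)⁻¹ := by
        rw [show (-(4:ℝ)/2) = -((2:ℕ):ℝ) by norm_num, Real.rpow_neg h1z.le,
          Real.rpow_natCast]
      rw [hrpow]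
      have hsq : (1 + ‖z‖^2)^2 ≤ (Real.exp ((D * p ↑γ + E)/K))^2 := by nlinarith
      have h2 : ((Real.exp ((D * p ↑γ + E)/K))^2)⁻¹ ≤ ((1 + ‖z‖^2)^2)⁻¹ :=
        inv_anti₀ (by positivity) hsq
      refine le_trans (le_of_eq ?_) h2
      rw [← Real.exp_add, ← Real.exp_nat_mul, ← Real.exp_neg]
      congr 1
      push_cast
      field_simp
      ring
    have hInt : ENNReal.ofReal (Real.exp (-(2*E/K)) * Real.exp (-(2*D/K) * p γ)) *
        MeasureTheory.volume (B γ) ≤ μ (B γ) := by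
      rw [hμ, MeasureTheory.withDensity_apply _ (measurableSet_ball : MeasurableSet (B γ))]
      calc ENNReal.ofReal (Real.exp (-(2*E/K)) * Real.exp (-(2*D/K) * p γ)) *
            MeasureTheory.volume (B γ)
          = ∫⁻ _ in B γ, ENNReal.ofReal (Real.exp (-(2*E/K)) * Real.exp (-(2*D/K) * p γ)) :=
            (MeasureTheory.setLIntegral_const _ _).symm
        _ ≤ ∫⁻ z in B γ, g z :=
            MeasureTheory.setLIntegral_mono' measurableSet_ball hptb
    refine le_trans ?_ hInt
    have hvol : MeasureTheory.volume (B γ) = ENNReal.ofReal ((r γ)^2 * Real.pi) := by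
      rw [hB]
      simp only []
      rw [Complex.volume_ball, ← ENNReal.ofReal_pow (hr0 γ).le,
        ENNReal.ofReal_mul (by positivity), ← NNReal.coe_real_pi,
        ENNReal.ofReal_coe_nnreal]
    rw [hvol, ← ENNReal.ofReal_mul (by positivity), ← ENNReal.ofReal_mul (by positivity)]
    apply ENNReal.ofReal_le_ofReal
    apply le_of_eq
    have hexp2 : Real.exp (-C₂ * p ↑γ) =
        Real.exp (-(2*D/K) * p ↑γ) * Real.exp (-C₀ * p ↑γ)^2 := by
      rw [sq, ← Real.exp_add, ← Real.exp_add, hC₂]; congr 1; ring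
    rw [hexp2, hr]
    ring
  have hsum : (∑' γ : Γ, μ (B γ)) ≤ μ Set.univ := by
    rw [ENNReal.tsum_eq_iSup_sum]
    apply iSup_le
    intro F
    rw [← MeasureTheory.measure_biUnion_finset (fun a _ b _ hab => hdisj a b hab)
      (fun γ _ => measurableSet_ball)]
    exact MeasureTheory.measure_mono (Set.subset_univ _)
  have htsum : (∑' γ : Γ, ENNReal.ofReal (Real.exp (-C₂ * p γ))) *
      ENNReal.ofReal (ε^2 * Real.pi * Real.exp (-(2*E/K))) ≤ μ Set.univ := by
    rw [← ENNReal.tsum_mul_right]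
    exact le_trans (ENNReal.tsum_le_tsum key) hsum
  have hS : (∑' γ : Γ, ENNReal.ofReal (Real.exp (-C₂ * p γ))) ≠ ⊤ := by
    intro htop
    rw [htop, ENNReal.top_mul (by
      simp only [ne_eq, ENNReal.ofReal_eq_zero, not_le]
      positivity)] at htsum
    exact hμfin.ne (top_le_iff.mp htsum)
  exact (ENNReal.summable_toReal hS).congr
    (fun γ => ENNReal.toReal_ofReal (Real.exp_nonneg _))
end

section
/- If a sequence Γ ⊂ ℂ is weakly separated with respect to the weight p, then ∑_{γ ∈ Γ} e^{−Cp(γ)} < ∞ for C large enough. -/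
open Complex Metric Set

open MeasureTheory in
theorem stmt13 (p : ℂ → ℝ) (hp : IsWeight p) (Γ : Set ℂ)
    (hw : WeaklySeparated p Γ) :
    ∃ C > 0, Summable (fun γ : Γ => Real.exp (-C * p γ)) := by
  obtain ⟨hp0, ⟨K, hK, hKp⟩, -⟩ := hp
  obtain ⟨ε, hε, C₀, hC₀, hdisj⟩ := hw
  set C : ℝ := 2 * C₀ + 2 / K with hCdef
  have hC : 0 < C := by positivity
  refine ⟨C, hC, ?_⟩
  -- the integrable comparison function
  set f : ℂ → ℝ := fun z => (1 + ‖z‖) ^ (-(3:ℝ)) with hfdef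
  have hfint : Integrable f := by
    apply integrable_one_add_norm (μ := volume) (E := ℂ)
    rw [Complex.finrank_real_complex]; norm_num
  have hfnn : ∀ z, 0 ≤ f z := fun z => Real.rpow_nonneg (by positivity) _
  -- radii
  set r : ℂ → ℝ := fun γ => ε * Real.exp (-C₀ * p γ) with hrdef
  have hrpos : ∀ γ, 0 < r γ := fun γ => by positivity
  have hrle : ∀ γ, r γ ≤ ε := by
    intro γ
    have : Real.exp (-C₀ * p γ) ≤ 1 := by
      rw [Real.exp_le_one_iff]
      have := hp0 γ; nlinarith
    calc r γ = ε * Real.exp (-C₀ * p γ) := rfl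
      _ ≤ ε * 1 := by nlinarith
      _ = ε := mul_one ε
  set M : ℝ := 4 * (1 + ε)^3 / (Real.pi * ε^2) with hMdef
  have hMpos : 0 < M := by
    have := Real.pi_pos; positivity
  -- key pointwise estimate
  have key : ∀ γ : ℂ, Real.exp (-C * p γ) ≤ M * ∫ z in ball γ (r γ), f z := by
    intro γ
    set c : ℝ := (4 * (1 + ε)^3)⁻¹ * Real.exp (-(2/K) * p γ) with hcdef
    have hlow : ∀ z ∈ ball γ (r γ), c ≤ f z := by
      intro z hz
      have hz1 : ‖z‖ ≤ ‖γ‖ + ε := by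
        have h1 : ‖z - γ‖ < r γ := by
          rwa [mem_ball, dist_eq_norm] at hz
        have h2 := norm_sub_norm_le z γ
        have := hrle γ; linarith
      have hb1 : (1 + ‖z‖)^3 ≤ ((1 + ε) * (1 + ‖γ‖))^3 := by
        apply pow_le_pow_left₀ (by positivity)
        have hg := norm_nonneg γ; nlinarith
      have hb2 : (1 + ‖γ‖)^3 ≤ 4 * Real.exp ((2/K) * p γ) := by
        have hlog : 1 + ‖γ‖^2 ≤ Real.exp (p γ / K) := by
          have h1 := hKp γ
          have h2 : Real.log (1 + ‖γ‖ ^ 2) ≤ p γ / K := by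
            rw [le_div_iff₀ hK] at *; nlinarith
          have h3 : (0:ℝ) < 1 + ‖γ‖ ^ 2 := by positivity
          calc 1 + ‖γ‖^2 = Real.exp (Real.log (1 + ‖γ‖ ^ 2)) := by
                rw [Real.exp_log h3]
            _ ≤ Real.exp (p γ / K) := Real.exp_le_exp.2 h2
        have he : Real.exp ((2/K) * p γ) = Real.exp (p γ / K) ^ 2 := by
          rw [← Real.exp_nat_mul]; congr 1; push_cast; ring
        rw [he]
        have hg := norm_nonneg γ
        have hE : (0:ℝ) < Real.exp (p γ / K) := Real.exp_pos _
        nlinarith [sq_nonneg (1 - ‖γ‖), sq_nonneg (‖γ‖), sq_nonneg (1 + ‖γ‖^2)]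
      have hfz : f z = ((1 + ‖z‖)^3)⁻¹ := by
        have h0 : (0:ℝ) ≤ 1 + ‖z‖ := by positivity
        simp only [hfdef]
        rw [← Real.rpow_natCast (1 + ‖z‖) 3, ← Real.rpow_neg h0]
        norm_num
      rw [hfz, hcdef]
      have h4 : (1 + ‖z‖)^3 ≤ (1 + ε)^3 * (4 * Real.exp ((2/K) * p γ)) := by
        calc (1 + ‖z‖)^3 ≤ ((1 + ε) * (1 + ‖γ‖))^3 := hb1
          _ = (1 + ε)^3 * (1 + ‖γ‖)^3 := by ring
          _ ≤ (1 + ε)^3 * (4 * Real.exp ((2/K) * p γ)) := by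
              apply mul_le_mul_of_nonneg_left hb2 (by positivity)
      have h5 : ((1 + ε)^3 * (4 * Real.exp ((2/K) * p γ)))⁻¹ ≤ ((1 + ‖z‖)^3)⁻¹ :=
        inv_anti₀ (by positivity) h4
      calc (4 * (1 + ε)^3)⁻¹ * Real.exp (-(2/K) * p γ)
          = ((1 + ε)^3 * (4 * Real.exp ((2/K) * p γ)))⁻¹ := by
            rw [show (-(2/K) * p γ) = -((2/K) * p γ) by ring, Real.exp_neg,
              mul_inv, mul_inv]
            ring
        _ ≤ ((1 + ‖z‖)^3)⁻¹ := h5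
    have hvol : (volume (ball γ (r γ))).toReal = r γ ^ 2 * Real.pi := by
      rw [Complex.volume_ball]
      rw [ENNReal.toReal_mul, ← ENNReal.ofReal_pow (le_of_lt (hrpos γ)),
        ENNReal.toReal_ofReal (by positivity), ENNReal.coe_toReal, NNReal.coe_real_pi]
    have hint : c * (volume (ball γ (r γ))).toReal ≤ ∫ z in ball γ (r γ), f z :=
      setIntegral_ge_of_const_le_real measurableSet_ball
        (measure_ball_lt_top).ne hlow hfint.integrableOn
    have heq : Real.exp (-C * p γ) = M * (c * (r γ ^ 2 * Real.pi)) := by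
      have hr2 : r γ ^ 2 = ε^2 * Real.exp (-(2*C₀) * p γ) := by
        rw [hrdef]
        have : Real.exp (-(2*C₀) * p γ) = Real.exp (-C₀ * p γ)^2 := by
          rw [← Real.exp_nat_mul]; congr 1; push_cast; ring
        rw [this]; ring
      rw [hr2, hMdef, hcdef]
      rw [show (-C * p γ) = (-(2/K) * p γ) + (-(2*C₀) * p γ) by rw [hCdef]; ring,
        Real.exp_add]
      have hπ := Real.pi_pos
      field_simp
    rw [heq]
    refine mul_le_mul_of_nonneg_left ?_ hMpos.le
    rw [← hvol]
    exact hint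
  -- finite partial sums are bounded
  apply summable_of_sum_le (c := M * ∫ z, f z) (fun γ => Real.exp_nonneg _)
  intro u
  have hmeas : ∀ γ : Γ, γ ∈ u → MeasurableSet (ball (γ:ℂ) (r γ)) :=
    fun γ _ => measurableSet_ball
  have hdisj' : Set.Pairwise (↑u : Set Γ) (Function.onFun Disjoint fun γ : Γ => ball (γ:ℂ) (r γ)) := by
    intro γ _ δ _ hne
    exact hdisj γ γ.2 δ δ.2 (fun h => hne (Subtype.ext h))
  have hInt : ∀ γ : Γ, γ ∈ u → IntegrableOn f (ball (γ:ℂ) (r γ)) := fun γ _ =>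
    hfint.integrableOn
  calc ∑ γ ∈ u, Real.exp (-C * p γ)
      ≤ ∑ γ ∈ u, M * ∫ z in ball (γ:ℂ) (r γ), f z := Finset.sum_le_sum fun γ _ => key γ
    _ = M * ∑ γ ∈ u, ∫ z in ball (γ:ℂ) (r γ), f z := by rw [Finset.mul_sum]
    _ = M * ∫ z in ⋃ γ ∈ u, ball (γ:ℂ) (r γ), f z := by
        rw [integral_biUnion_finset u hmeas hdisj' hInt]
    _ ≤ M * ∫ z, f z := by
        apply mul_le_mul_of_nonneg_left _ hMpos.le
        exact setIntegral_le_integral hfint (Filter.Eventually.of_forall hfnn)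
end
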